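/- arXiv:2204.08051 — 3 statements merged into one kernel-verified Lean document; each statement's English description precedes it below -/
import Mathlib

section
/- Let A be a subset of X of finite outer measure μ(A), and s any monotone size. Then for 0 < p ≤ p₁ ≤ ∞ and 0 < q ≤ ∞: ‖F·1_A‖_{L^{p,q}(s)} ≤ 2^{1/p} ‖F·1_A‖_{L^{p₁,q}(s)} · μ(A)^{1/p - 1/p₁}. -/
open ENNReal

/-- A size is monotone in the function argument. -/
def IsSize {X : Type*} (s : (X → ℝ≥0∞) → Set X → ℝ≥0∞) : Prop :=
  ∀ (F G : X → ℝ≥0∞) (T : Set X), (∀ x, F x ≤ G x) → s F T ≤ s G T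

/-- Outer essential supremum `outsup_s F = sup_{T ∈ 𝒯} s(F,T)`. -/
noncomputable def outSup {X : Type*} (𝒯 : Set (Set X))
    (s : (X → ℝ≥0∞) → Set X → ℝ≥0∞) (F : X → ℝ≥0∞) : ℝ≥0∞ :=
  ⨆ T ∈ 𝒯, s F T

/-- Super-level measure `μ_s[F](τ) = inf {μ(A) : outsup_s(F·1_{X∖A}) ≤ τ}`. -/
noncomputable def superLevel {X : Type*} (μ : Set X → ℝ≥0∞) (𝒯 : Set (Set X))
    (s : (X → ℝ≥0∞) → Set X → ℝ≥0∞) (F : X → ℝ≥0∞) (τ : ℝ≥0∞) : ℝ≥0∞ :=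
  ⨅ (A : Set X) (_ : outSup 𝒯 s (Set.indicator Aᶜ F) ≤ τ), μ A

/-- Nondecreasing rearrangement `F^{*,s}(t) = inf {τ : μ_s[F](τ) ≤ t}`. -/
noncomputable def rearr {X : Type*} (μ : Set X → ℝ≥0∞) (𝒯 : Set (Set X))
    (s : (X → ℝ≥0∞) → Set X → ℝ≥0∞) (F : X → ℝ≥0∞) (t : ℝ) : ℝ≥0∞ :=
  sInf {τ : ℝ≥0∞ | superLevel μ 𝒯 s F τ ≤ ENNReal.ofReal t}

/-- Outer Lorentz quasinorm `‖F‖_{L^{p,q}(s)} = ‖ t^{1/p} F^{*,s}(t) ‖_{L^q(dt/t)}`. -/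
noncomputable def outerLorentz {X : Type*} (μ : Set X → ℝ≥0∞) (𝒯 : Set (Set X))
    (s : (X → ℝ≥0∞) → Set X → ℝ≥0∞) (F : X → ℝ≥0∞) (p q : ℝ≥0∞) : ℝ≥0∞ :=
  if q = ∞ then ⨆ (t : ℝ) (_ : 0 < t), ENNReal.ofReal t ^ p.toReal⁻¹ * rearr μ 𝒯 s F t
  else (∫⁻ t in Set.Ioi (0 : ℝ),
      (ENNReal.ofReal t ^ p.toReal⁻¹ * rearr μ 𝒯 s F t) ^ q.toReal *
        ENNReal.ofReal t⁻¹) ^ q.toReal⁻¹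

/-- for a set `A` of finite outer measure and a monotone size `s`
(vanishing on the zero function), for `0 < p ≤ p₁ ≤ ∞` and `0 < q ≤ ∞`:
`‖F·1_A‖_{L^{p,q}(s)} ≤ 2^{1/p} ‖F·1_A‖_{L^{p₁,q}(s)} μ(A)^{1/p - 1/p₁}`. -/
theorem stmt7 {X : Type*} (𝒯 : Set (Set X)) (μ : Set X → ℝ≥0∞)
    (s : (X → ℝ≥0∞) → Set X → ℝ≥0∞) (hs : IsSize s)
    (hs0 : ∀ T : Set X, s (fun _ => 0) T = 0)
    (A : Set X) (hA : μ A < ∞) (F : X → ℝ≥0∞)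
    (p p₁ q : ℝ≥0∞) (hp : 0 < p) (hpp : p ≤ p₁) (hq : 0 < q) :
    outerLorentz μ 𝒯 s (Set.indicator A F) p q ≤
      (2 : ℝ≥0∞) ^ p.toReal⁻¹ * outerLorentz μ 𝒯 s (Set.indicator A F) p₁ q *
        μ A ^ (p.toReal⁻¹ - p₁.toReal⁻¹) := by
  classical
  set G := Set.indicator A F with hG
  set a := p.toReal⁻¹ with ha
  set b := p₁.toReal⁻¹ with hbdef
  -- the super-level measure is always at most μ A
  have hSL : ∀ τ : ℝ≥0∞, superLevel μ 𝒯 s G τ ≤ μ A := by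
    intro τ
    have hzero : Set.indicator Aᶜ G = fun _ => 0 := by
      funext x
      by_cases hx : x ∈ A
      · simp [Set.indicator_apply, hx]
      · simp [Set.indicator_apply, hx, hG]
    refine iInf_le_of_le A (iInf_le_of_le ?_ le_rfl)
    rw [hzero]
    calc outSup 𝒯 s (fun _ => 0) ≤ 0 := iSup₂_le fun T _ => (hs0 T).le
      _ ≤ τ := zero_le
  have hrearr0 : ∀ t : ℝ, μ A ≤ ENNReal.ofReal t → rearr μ 𝒯 s G t = 0 := by
    intro t ht
    exact le_antisymm (sInf_le (le_trans (hSL 0) ht)) zero_le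
  have hanneg : 0 ≤ a := by positivity
  have hb : b ≤ a := by
    by_cases h1 : p₁ = ∞
    · simp [hbdef, h1, hanneg]
    · have hpt : p ≠ ∞ := ne_top_of_le_ne_top h1 hpp
      have h0 : 0 < p.toReal := ENNReal.toReal_pos hp.ne' hpt
      have hle : p.toReal ≤ p₁.toReal := (ENNReal.toReal_le_toReal hpt h1).mpr hpp
      exact inv_anti₀ h0 hle
  have hc : 0 ≤ a - b := sub_nonneg.mpr hb
  -- pointwise bound
  have hpw : ∀ t : ℝ, 0 < t →
      ENNReal.ofReal t ^ a * rearr μ 𝒯 s G t ≤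
        μ A ^ (a - b) * (ENNReal.ofReal t ^ b * rearr μ 𝒯 s G t) := by
    intro t ht
    by_cases hle : ENNReal.ofReal t ≤ μ A
    · have h1 : ENNReal.ofReal t ^ a
          = ENNReal.ofReal t ^ (a - b) * ENNReal.ofReal t ^ b := by
        rw [← ENNReal.rpow_add _ _ (ENNReal.ofReal_pos.mpr ht).ne' ENNReal.ofReal_ne_top,
          sub_add_cancel]
      rw [h1, mul_assoc]
      exact mul_le_mul_left (ENNReal.rpow_le_rpow hle hc) _
    · have h0 : rearr μ 𝒯 s G t = 0 := hrearr0 t (lt_of_not_ge hle).le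
      simp [h0]
  have h2 : (1 : ℝ≥0∞) ≤ (2 : ℝ≥0∞) ^ a := by
    calc (1 : ℝ≥0∞) = (2 : ℝ≥0∞) ^ (0 : ℝ) := by simp
      _ ≤ (2 : ℝ≥0∞) ^ a := ENNReal.rpow_le_rpow_of_exponent_le (by norm_num) hanneg
  have key : outerLorentz μ 𝒯 s G p q ≤
      outerLorentz μ 𝒯 s G p₁ q * μ A ^ (a - b) := by
    by_cases hqt : q = ∞
    · simp only [outerLorentz, if_pos hqt, ← ha, ← hbdef]
      refine iSup₂_le fun t ht => ?_
      calc ENNReal.ofReal t ^ a * rearr μ 𝒯 s G t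
          ≤ μ A ^ (a - b) * (ENNReal.ofReal t ^ b * rearr μ 𝒯 s G t) := hpw t ht
        _ ≤ μ A ^ (a - b) * ⨆ (t : ℝ) (_ : 0 < t),
              ENNReal.ofReal t ^ b * rearr μ 𝒯 s G t :=
            mul_le_mul_right (le_iSup₂ (f := fun (t : ℝ) (_ : 0 < t) =>
              ENNReal.ofReal t ^ b * rearr μ 𝒯 s G t) t ht) _
        _ = (⨆ (t : ℝ) (_ : 0 < t), ENNReal.ofReal t ^ b * rearr μ 𝒯 s G t)
              * μ A ^ (a - b) := mul_comm _ _
    · simp only [outerLorentz, if_neg hqt, ← ha, ← hbdef]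
      have hqr : 0 < q.toReal := ENNReal.toReal_pos hq.ne' hqt
      set C : ℝ≥0∞ := μ A ^ (a - b) with hC
      have hCne : C ≠ ∞ := ENNReal.rpow_ne_top_of_nonneg hc hA.ne
      have hmono : (∫⁻ t in Set.Ioi (0 : ℝ),
            (ENNReal.ofReal t ^ a * rearr μ 𝒯 s G t) ^ q.toReal * ENNReal.ofReal t⁻¹)
          ≤ ∫⁻ t in Set.Ioi (0 : ℝ),
            C ^ q.toReal *
              ((ENNReal.ofReal t ^ b * rearr μ 𝒯 s G t) ^ q.toReal *
                ENNReal.ofReal t⁻¹) := by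
        refine MeasureTheory.lintegral_mono_ae ?_
        rw [MeasureTheory.ae_restrict_iff' measurableSet_Ioi]
        refine MeasureTheory.ae_of_all _ fun t ht => ?_
        have this := le_of_le_of_eq (ENNReal.rpow_le_rpow (hpw t ht) hqr.le)
          (ENNReal.mul_rpow_of_nonneg _ _ hqr.le)
        calc (ENNReal.ofReal t ^ a * rearr μ 𝒯 s G t) ^ q.toReal * ENNReal.ofReal t⁻¹
            ≤ (C ^ q.toReal * (ENNReal.ofReal t ^ b * rearr μ 𝒯 s G t) ^ q.toReal)
                * ENNReal.ofReal t⁻¹ := mul_le_mul_left this _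
          _ = _ := by ring
      rw [MeasureTheory.lintegral_const_mul' _ _
        (ENNReal.rpow_ne_top_of_nonneg hqr.le hCne)] at hmono
      calc (∫⁻ t in Set.Ioi (0 : ℝ),
            (ENNReal.ofReal t ^ a * rearr μ 𝒯 s G t) ^ q.toReal * ENNReal.ofReal t⁻¹)
              ^ q.toReal⁻¹
          ≤ (C ^ q.toReal * ∫⁻ t in Set.Ioi (0 : ℝ),
              (ENNReal.ofReal t ^ b * rearr μ 𝒯 s G t) ^ q.toReal *
                ENNReal.ofReal t⁻¹) ^ q.toReal⁻¹ :=
            ENNReal.rpow_le_rpow hmono (by positivity)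
        _ = (C ^ q.toReal) ^ q.toReal⁻¹ * (∫⁻ t in Set.Ioi (0 : ℝ),
              (ENNReal.ofReal t ^ b * rearr μ 𝒯 s G t) ^ q.toReal *
                ENNReal.ofReal t⁻¹) ^ q.toReal⁻¹ :=
            ENNReal.mul_rpow_of_nonneg _ _ (by positivity)
        _ = C * (∫⁻ t in Set.Ioi (0 : ℝ),
              (ENNReal.ofReal t ^ b * rearr μ 𝒯 s G t) ^ q.toReal *
                ENNReal.ofReal t⁻¹) ^ q.toReal⁻¹ := by
            rw [← ENNReal.rpow_mul, mul_inv_cancel₀ hqr.ne', ENNReal.rpow_one]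
        _ = _ := mul_comm _ _
  calc outerLorentz μ 𝒯 s G p q ≤ outerLorentz μ 𝒯 s G p₁ q * μ A ^ (a - b) := key
    _ ≤ ((2 : ℝ≥0∞) ^ a * outerLorentz μ 𝒯 s G p₁ q) * μ A ^ (a - b) :=
        mul_le_mul_left (le_mul_of_one_le_left zero_le h2) _
end

section
/- (Reverse-Hölder outer estimate, discrete core) Let m ≥ 2, suppose functions F₁,…,F_m on a set X with weighted counting measure satisfy: normalizations ‖F₁‖_{X_a^{p₁,∞}} = 1 and ‖F_ℓ‖_{L^{p_ℓ,∞}} ≤ 1, ‖F_ℓ‖_{L^∞} ≤ 1 for 2 ≤ ℓ ≤ m, where 1 < a ≤ p₁ < ∞, 1 ≤ p_ℓ < ∞, and ε := (Σ_ℓ 1/p_ℓ) − 1 > 0, and the sizes satisfy the submultiplicative Hölder condition with s = size₁. Then (1/|J|)·Σ_{P∈X} |I_P|·|F₁F₂⋯F_m(P)| ≤ C_m · a/(ε(a−1)). -/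
open ENNReal

/-- The outer measure generated by covering with sets from `𝒯`, with cost `top T / |J|`. -/
noncomputable def outerMeasureOf {X : Type*} (𝒯 : Set (Set X)) (top : Set X → ℝ≥0∞)
    (Jvol : ℝ≥0∞) (A : Set X) : ℝ≥0∞ :=
  ⨅ (𝒞 : Finset (Set X)) (_ : ↑𝒞 ⊆ 𝒯) (_ : A ⊆ ⋃₀ ↑𝒞), (∑ T ∈ 𝒞, top T) / Jvol

/-- `size₁(F,T) = (Σ_{P ∈ T} |I_P| F(P)) / |I_T|` on a finite tile set. -/
noncomputable def size1 {X : Type*} [Fintype X] (ι : X → ℝ≥0∞) (top : Set X → ℝ≥0∞)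
    (F : X → ℝ≥0∞) (T : Set X) : ℝ≥0∞ :=
  (∑ P : X, T.indicator (fun P => ι P * F P) P) / top T

/-- The reverse-Hölder quasinorm
`‖F‖_{X_a^{p,∞}(s)} = sup_A ‖F 1_A‖_{L^{a,∞}(s)} / μ(A)^{1/a - 1/p}`. -/
noncomputable def xNorm {X : Type*} (μ : Set X → ℝ≥0∞) (𝒯 : Set (Set X))
    (s : (X → ℝ≥0∞) → Set X → ℝ≥0∞) (F : X → ℝ≥0∞) (a p : ℝ≥0∞) : ℝ≥0∞ :=
  ⨆ A : Set X, outerLorentz μ 𝒯 s (Set.indicator A F) a ∞ /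
    μ A ^ (a.toReal⁻¹ - p.toReal⁻¹)

section Helpers

variable {X : Type} [Fintype X] {𝒯 : Set (Set X)} {top : Set X → ℝ≥0∞} {Jvol : ℝ≥0∞}

lemma mu_le {𝒞 : Finset (Set X)} (h1 : ↑𝒞 ⊆ 𝒯) {A : Set X} (h2 : A ⊆ ⋃₀ ↑𝒞) :
    outerMeasureOf 𝒯 top Jvol A ≤ (∑ T ∈ 𝒞, top T) / Jvol := by
  unfold outerMeasureOf
  exact iInf_le_of_le 𝒞 (iInf_le_of_le h1 (iInf_le_of_le h2 le_rfl))

lemma exists_feasible_cover (hcov : ∀ x : X, ∃ T ∈ 𝒯, x ∈ T) (A : Set X) :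
    ∃ 𝒞 : Finset (Set X), ↑𝒞 ⊆ 𝒯 ∧ A ⊆ ⋃₀ ↑𝒞 := by
  classical
  choose Tx hTx hxTx using hcov
  refine ⟨Finset.univ.image Tx, ?_, ?_⟩
  · intro T hT
    simp only [Finset.coe_image, Set.mem_image] at hT
    obtain ⟨x, _, rfl⟩ := hT
    exact hTx x
  · intro x _
    exact ⟨Tx x, by simp, hxTx x⟩

lemma mu_exists_cover (hcov : ∀ x : X, ∃ T ∈ 𝒯, x ∈ T) (A : Set X) :
    ∃ 𝒞 : Finset (Set X), ↑𝒞 ⊆ 𝒯 ∧ A ⊆ ⋃₀ ↑𝒞 ∧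
      (∑ T ∈ 𝒞, top T) / Jvol = outerMeasureOf 𝒯 top Jvol A := by
  classical
  have : Finite (Set X) := inferInstance
  obtain ⟨𝒞₀, h𝒞₀⟩ := exists_feasible_cover hcov A
  -- minimize cost over the subtype of feasible covers
  have hne : Nonempty {𝒞 : Finset (Set X) // ↑𝒞 ⊆ 𝒯 ∧ A ⊆ ⋃₀ ↑𝒞} := ⟨⟨𝒞₀, h𝒞₀⟩⟩
  obtain ⟨⟨𝒞, h1, h2⟩, hmin⟩ :=
    Finite.exists_min (fun 𝒞 : {𝒞 : Finset (Set X) // ↑𝒞 ⊆ 𝒯 ∧ A ⊆ ⋃₀ ↑𝒞} =>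
      (∑ T ∈ 𝒞.1, top T) / Jvol)
  refine ⟨𝒞, h1, h2, le_antisymm ?_ (mu_le h1 h2)⟩
  unfold outerMeasureOf
  exact le_iInf fun 𝒞' => le_iInf fun h1' => le_iInf fun h2' => hmin ⟨𝒞', h1', h2'⟩

lemma mu_mono {A B : Set X} (h : A ⊆ B) :
    outerMeasureOf 𝒯 top Jvol A ≤ outerMeasureOf 𝒯 top Jvol B := by
  unfold outerMeasureOf
  exact le_iInf fun 𝒞 => le_iInf fun h1 => le_iInf fun h2 =>
    mu_le h1 (h.trans h2)

lemma mu_empty : outerMeasureOf 𝒯 top Jvol ∅ = 0 := by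
  refine le_antisymm ?_ (zero_le)
  have := mu_le (𝒯 := 𝒯) (𝒞 := (∅ : Finset (Set X))) (top := top) (Jvol := Jvol)
    (by simp) (A := ∅) (by simp)
  simpa using this

lemma mu_union_le (hcov : ∀ x : X, ∃ T ∈ 𝒯, x ∈ T) (A B : Set X) :
    outerMeasureOf 𝒯 top Jvol (A ∪ B) ≤
      outerMeasureOf 𝒯 top Jvol A + outerMeasureOf 𝒯 top Jvol B := by
  classical
  obtain ⟨𝒞A, h1A, h2A, hA⟩ := mu_exists_cover (top := top) (Jvol := Jvol) hcov A
  obtain ⟨𝒞B, h1B, h2B, hB⟩ := mu_exists_cover (top := top) (Jvol := Jvol) hcov B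
  rw [← hA, ← hB]
  refine le_trans (mu_le (𝒞 := 𝒞A ∪ 𝒞B) ?_ ?_) ?_
  · push_cast; exact Set.union_subset h1A h1B
  · push_cast
    refine Set.union_subset (h2A.trans ?_) (h2B.trans ?_) <;>
      exact Set.sUnion_mono (by intro x hx; simp only [Finset.coe_union, Set.mem_union]; tauto)
  · rw [← ENNReal.add_div]
    refine ENNReal.div_le_div_right ?_ _
    calc ∑ T ∈ 𝒞A ∪ 𝒞B, top T ≤ ∑ T ∈ 𝒞A, top T + ∑ T ∈ 𝒞B \ 𝒞A, top T := by
          rw [← Finset.sum_union (Finset.disjoint_sdiff)]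
          exact Finset.sum_le_sum_of_subset (by intro x hx; simp at hx ⊢; tauto)
      _ ≤ _ := by
          gcongr
          exact Finset.sdiff_subset

lemma mu_pos (htop : ∀ T ∈ 𝒯, 0 < top T ∧ top T < ∞) (hcov : ∀ x : X, ∃ T ∈ 𝒯, x ∈ T)
    (hJtop : Jvol < ∞) {A : Set X} (hA : A.Nonempty) :
    0 < outerMeasureOf 𝒯 top Jvol A := by
  classical
  obtain ⟨𝒞, h1, h2, heq⟩ := mu_exists_cover (top := top) (Jvol := Jvol) hcov A
  rw [← heq]
  obtain ⟨x, hx⟩ := hA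
  obtain ⟨T, hT𝒞, hxT⟩ := by
    have := h2 hx
    simpa using this
  have hTpos : 0 < top T := (htop T (h1 hT𝒞)).1
  have hsum : top T ≤ ∑ T' ∈ 𝒞, top T' := Finset.single_le_sum (fun _ _ => zero_le) hT𝒞
  exact ENNReal.div_pos (fun h => by simp [h] at hsum; exact absurd hsum (by simpa using hTpos.ne')) hJtop.ne

lemma mu_univ_lt (htop : ∀ T ∈ 𝒯, 0 < top T ∧ top T < ∞) (hcov : ∀ x : X, ∃ T ∈ 𝒯, x ∈ T)
    (hJ0 : 0 < Jvol) : outerMeasureOf 𝒯 top Jvol (Set.univ : Set X) < ∞ := by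
  classical
  choose Tx hTx hxTx using hcov
  have hle : outerMeasureOf 𝒯 top Jvol (Set.univ : Set X) ≤
      (∑ T ∈ Finset.univ.image Tx, top T) / Jvol := by
    refine mu_le ?_ ?_
    · intro T hT
      simp only [Finset.coe_image, Set.mem_image] at hT
      obtain ⟨x, _, rfl⟩ := hT
      exact hTx x
    · intro x _
      exact ⟨Tx x, by simp, hxTx x⟩
  refine lt_of_le_of_lt hle (ENNReal.div_lt_top ?_ hJ0.ne')
  refine (ENNReal.sum_lt_top.2 fun T hT => ?_).ne
  simp only [Finset.mem_image] at hT
  obtain ⟨x, _, rfl⟩ := hT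
  exact (htop _ (hTx x)).2

lemma outSup_mono {s : (X → ℝ≥0∞) → Set X → ℝ≥0∞} (hs : IsSize s) {F G : X → ℝ≥0∞}
    (h : ∀ x, F x ≤ G x) : outSup 𝒯 s F ≤ outSup 𝒯 s G :=
  iSup₂_mono fun T _ => hs F G T h

lemma superLevel_anti {μ : Set X → ℝ≥0∞} {s : (X → ℝ≥0∞) → Set X → ℝ≥0∞} {F : X → ℝ≥0∞}
    {τ τ' : ℝ≥0∞} (h : τ ≤ τ') :
    superLevel μ 𝒯 s F τ' ≤ superLevel μ 𝒯 s F τ := by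
  unfold superLevel
  exact le_iInf₂ fun A hA => iInf₂_le A (hA.trans h)

lemma extract {μ : Set X → ℝ≥0∞} {s : (X → ℝ≥0∞) → Set X → ℝ≥0∞} {G : X → ℝ≥0∞}
    {t : ℝ} (ht : 0 < t) {ρ : ℝ≥0∞} (hρ : 0 < ρ) (hρtop : ρ ≠ ∞)
    (h : rearr μ 𝒯 s G t ≤ ρ) :
    ∃ B : Set X, μ B ≤ 2 * ENNReal.ofReal t ∧
      outSup 𝒯 s (Set.indicator Bᶜ G) ≤ 2 * ρ := by
  have hlt : rearr μ 𝒯 s G t < 2 * ρ := by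
    refine lt_of_le_of_lt h ?_
    have : ρ < ρ + ρ := ENNReal.lt_add_right hρtop hρ.ne'
    simpa [two_mul] using this
  obtain ⟨τ, hτmem, hτlt⟩ := sInf_lt_iff.1 hlt
  have hsl : superLevel μ 𝒯 s G (2 * ρ) ≤ ENNReal.ofReal t :=
    le_trans (superLevel_anti hτlt.le) hτmem
  have hlt2 : superLevel μ 𝒯 s G (2 * ρ) < 2 * ENNReal.ofReal t := by
    refine lt_of_le_of_lt hsl ?_
    have h0 : (0:ℝ≥0∞) < ENNReal.ofReal t := ENNReal.ofReal_pos.2 ht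
    have : ENNReal.ofReal t < ENNReal.ofReal t + ENNReal.ofReal t :=
      ENNReal.lt_add_right ENNReal.ofReal_ne_top h0.ne'
    simpa [two_mul] using this
  unfold superLevel at hlt2
  obtain ⟨B, hB⟩ := iInf_lt_iff.1 hlt2
  obtain ⟨hout, hμ⟩ := iInf_lt_iff.1 hB
  exact ⟨B, hμ.le, hout⟩

lemma weak_rearr {μ : Set X → ℝ≥0∞} {s : (X → ℝ≥0∞) → Set X → ℝ≥0∞} {F : X → ℝ≥0∞}
    {p : ℝ≥0∞} {Λ : ℝ≥0∞} (h : outerLorentz μ 𝒯 s F p ∞ ≤ Λ) {t : ℝ} (ht : 0 < t) :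
    rearr μ 𝒯 s F t ≤ ENNReal.ofReal t ^ (-(p.toReal)⁻¹) * Λ := by
  unfold outerLorentz at h
  rw [if_pos rfl] at h
  have hterm : ENNReal.ofReal t ^ p.toReal⁻¹ * rearr μ 𝒯 s F t ≤ Λ :=
    le_trans (le_iSup₂ (f := fun (t : ℝ) (_ : 0 < t) =>
      ENNReal.ofReal t ^ p.toReal⁻¹ * rearr μ 𝒯 s F t) t ht) h
  set c := ENNReal.ofReal t ^ p.toReal⁻¹ with hc
  have hc0 : c ≠ 0 := by
    refine (ENNReal.rpow_pos (ENNReal.ofReal_pos.2 ht) ENNReal.ofReal_ne_top).ne'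
  have hctop : c ≠ ∞ :=
    ENNReal.rpow_ne_top_of_nonneg (by positivity) ENNReal.ofReal_ne_top
  have : rearr μ 𝒯 s F t = c⁻¹ * (c * rearr μ 𝒯 s F t) := by
    rw [← mul_assoc, ENNReal.inv_mul_cancel hc0 hctop, one_mul]
  rw [this, ENNReal.rpow_neg]
  exact mul_le_mul_right hterm _

lemma xnorm_bound {μ : Set X → ℝ≥0∞} {s : (X → ℝ≥0∞) → Set X → ℝ≥0∞} {F : X → ℝ≥0∞}
    {a p : ℝ≥0∞} (h : xNorm μ 𝒯 s F a p = 1) (A : Set X) :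
    outerLorentz μ 𝒯 s (Set.indicator A F) a ∞ ≤ μ A ^ (a.toReal⁻¹ - p.toReal⁻¹) := by
  have hA : outerLorentz μ 𝒯 s (Set.indicator A F) a ∞ /
      μ A ^ (a.toReal⁻¹ - p.toReal⁻¹) ≤ 1 := by
    rw [← h]
    exact le_iSup (f := fun A : Set X => outerLorentz μ 𝒯 s (Set.indicator A F) a ∞ /
      μ A ^ (a.toReal⁻¹ - p.toReal⁻¹)) A
  have := (ENNReal.div_le_iff_le_mul (Or.inr (by simp)) (Or.inr one_ne_zero)).1 hA
  simpa using this

lemma starLem {m : ℕ} (hm : 2 ≤ m) (htop : ∀ T ∈ 𝒯, 0 < top T ∧ top T < ∞)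
    (hcov : ∀ x : X, ∃ T ∈ 𝒯, x ∈ T) (ι : X → ℝ≥0∞)
    (sj : Fin m → (X → ℝ≥0∞) → Set X → ℝ≥0∞)
    (hHolder : ∀ (G : Fin m → X → ℝ≥0∞), ∀ T ∈ 𝒯,
      size1 ι top (fun x => ∏ j, G j x) T ≤ ∏ j, sj j (G j) T)
    (F : Fin m → X → ℝ≥0∞) (B : Set X) (u : Fin m → ℝ≥0∞)
    (hu : ∀ j, outSup 𝒯 (sj j) (Set.indicator B (F j)) ≤ u j) :
    (∑ P : X, Set.indicator B (fun P => ι P * ∏ j, F j P) P) / Jvol ≤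
      outerMeasureOf 𝒯 top Jvol B * ∏ j, u j := by
  classical
  have hFin : Nonempty (Fin m) := ⟨⟨0, by omega⟩⟩
  rcases B.eq_empty_or_nonempty with rfl | hBne
  · simp
  obtain ⟨𝒞, h1, h2, heq⟩ := mu_exists_cover (top := top) (Jvol := Jvol) hcov B
  rw [← heq]
  have key : (∑ P : X, Set.indicator B (fun P => ι P * ∏ j, F j P) P) ≤
      (∏ j, u j) * ∑ T ∈ 𝒞, top T := by
    have step1 : (∑ P : X, Set.indicator B (fun P => ι P * ∏ j, F j P) P) ≤
        ∑ T ∈ 𝒞, ∑ P : X,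
          Set.indicator T (fun P => ι P * ∏ j, Set.indicator B (F j) P) P := by
      rw [Finset.sum_comm]
      refine Finset.sum_le_sum fun P _ => ?_
      by_cases hP : P ∈ B
      · obtain ⟨T, hT𝒞, hPT⟩ : ∃ T ∈ 𝒞, P ∈ T := by
          have := h2 hP; simpa using this
        refine le_trans ?_ (Finset.single_le_sum (fun _ _ => zero_le) hT𝒞)
        rw [Set.indicator_of_mem hP, Set.indicator_of_mem hPT]
        refine le_of_eq ?_
        congr 1
        exact Finset.prod_congr rfl fun j _ => (Set.indicator_of_mem hP _).symm
      · rw [Set.indicator_of_notMem hP]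
        exact zero_le
    refine le_trans step1 ?_
    rw [Finset.mul_sum]
    refine Finset.sum_le_sum fun T hT𝒞 => ?_
    have hT𝒯 : T ∈ 𝒯 := h1 hT𝒞
    have h0 : (top T) ≠ 0 := (htop T hT𝒯).1.ne'
    have htp : (top T) ≠ ∞ := (htop T hT𝒯).2.ne
    have hsz : (∑ P : X, Set.indicator T
          (fun P => ι P * ∏ j, Set.indicator B (F j) P) P) =
        size1 ι top (fun x => ∏ j, Set.indicator B (F j) x) T * top T := by
      unfold size1
      rw [ENNReal.div_mul_cancel h0 htp]
    rw [hsz]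
    refine mul_le_mul_left ?_ _
    refine le_trans (hHolder (fun j => Set.indicator B (F j)) T hT𝒯) ?_
    refine Finset.prod_le_prod' fun j _ => ?_
    refine le_trans ?_ (hu j)
    exact le_iSup₂ (f := fun (T : Set X) (_ : T ∈ 𝒯) =>
      sj j (Set.indicator B (F j)) T) T hT𝒯
  calc (∑ P : X, Set.indicator B (fun P => ι P * ∏ j, F j P) P) / Jvol
      ≤ ((∏ j, u j) * ∑ T ∈ 𝒞, top T) / Jvol := ENNReal.div_le_div_right key _
    _ = (∑ T ∈ 𝒞, top T) / Jvol * ∏ j, u j := by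
        rw [div_eq_mul_inv, div_eq_mul_inv]; ring

lemma one_sub_two_rpow_neg {x : ℝ} (hx0 : 0 < x) (hx1 : x ≤ 1) :
    x / 4 ≤ 1 - (2:ℝ) ^ (-x) := by
  have hlog2 : (0.6931471803:ℝ) < Real.log 2 := Real.log_two_gt_d9
  have hrw : (2:ℝ) ^ (-x) = Real.exp (-(x * Real.log 2)) := by
    rw [Real.rpow_def_of_pos (by norm_num), mul_comm, ← neg_mul]
  set u := x * Real.log 2 with hu
  have hu0 : 0 < u := by positivity
  have hukey : Real.exp (-u) + u * Real.exp (-u) ≤ 1 := by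
    have h1 : 1 + u ≤ Real.exp u := by have := Real.add_one_le_exp u; linarith
    have h2 : (1 + u) * Real.exp (-u) ≤ Real.exp u * Real.exp (-u) := by
      apply mul_le_mul_of_nonneg_right h1 (Real.exp_nonneg _)
    rw [← Real.exp_add] at h2
    simp only [add_neg_cancel, Real.exp_zero] at h2
    nlinarith [h2]
  have hul : u ≤ Real.log 2 := by
    rw [hu]
    nlinarith [hlog2]
  have hexp_half : (1:ℝ)/2 ≤ Real.exp (-u) := by
    have : Real.exp (-Real.log 2) ≤ Real.exp (-u) := by
      apply Real.exp_le_exp.2; linarith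
    rw [Real.exp_neg, Real.exp_log (by norm_num : (0:ℝ) < 2)] at this
    linarith
  have : x / 4 ≤ u * Real.exp (-u) := by
    calc x / 4 ≤ x * Real.log 2 * (1/2) := by nlinarith
      _ ≤ u * Real.exp (-u) := by
          rw [hu]
          apply mul_le_mul_of_nonneg_left hexp_half (by positivity)
  rw [hrw]
  linarith

lemma geom_aux {x : ℝ} (hx0 : 0 < x) (hx1 : x ≤ 1) (K : ℕ) :
    ∑ k ∈ Finset.range K, ((2:ℝ) ^ (-x)) ^ k ≤ 4 / x := by
  have hr0 : (0:ℝ) ≤ (2:ℝ) ^ (-x) := Real.rpow_nonneg (by norm_num) _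
  have hr1 : (2:ℝ) ^ (-x) < 1 :=
    Real.rpow_lt_one_of_one_lt_of_neg (by norm_num) (by linarith)
  have hgeom : ∑ k ∈ Finset.range K, ((2:ℝ) ^ (-x)) ^ k ≤ 1 / (1 - (2:ℝ)^(-x)) := by
    rw [le_div_iff₀ (by linarith)]
    have := geom_sum_mul ((2:ℝ)^(-x)) K
    nlinarith [pow_nonneg hr0 K]
  have h2 := one_sub_two_rpow_neg hx0 hx1
  calc ∑ k ∈ Finset.range K, ((2:ℝ) ^ (-x)) ^ k ≤ 1 / (1 - (2:ℝ)^(-x)) := hgeom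
    _ ≤ 1 / (x/4) := by
        apply one_div_le_one_div_of_le (by positivity) h2
    _ = 4 / x := by field_simp

lemma chain_sum (Bseq : ℕ → Set X) (K : ℕ) (f : X → ℝ≥0∞) :
    ∑ P : X, (Bseq 0).indicator f P ≤
      (∑ k ∈ Finset.range K, ∑ P : X, ((Bseq k \ Bseq (k+1)).indicator f) P) +
        ∑ P : X, (Bseq K).indicator f P := by
  classical
  rw [Finset.sum_comm' (t' := Finset.univ) (s' := fun _ => Finset.range K)
    (t := fun _ => Finset.univ) (s := Finset.range K) (by intro x y; simp)]
  rw [← Finset.sum_add_distrib]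
  refine Finset.sum_le_sum fun P _ => ?_
  by_cases hP : P ∈ Bseq 0
  · by_cases hPK : P ∈ Bseq K
    · rw [Set.indicator_of_mem hPK]
      rw [Set.indicator_of_mem hP]
      exact le_add_self
    · have hexit : ∃ k, k < K ∧ P ∈ Bseq k ∧ P ∉ Bseq (k+1) := by
        by_contra hcon
        push_neg at hcon
        have hall : ∀ k, k ≤ K → P ∈ Bseq k := by
          intro k hk
          induction k with
          | zero => exact hP
          | succ n ih =>
            exact hcon n (by omega) (ih (by omega))
        exact hPK (hall K le_rfl)
      obtain ⟨k, hkK, hPk, hPk1⟩ := hexit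
      rw [Set.indicator_of_mem hP]
      refine le_trans ?_ (le_add_right le_rfl)
      refine le_trans ?_ (Finset.single_le_sum (f := fun k =>
        (Set.indicator (Bseq k \ Bseq (k+1)) f) P) (fun _ _ => zero_le)
        (Finset.mem_range.2 hkK))
      rw [Set.indicator_of_mem (Set.mem_diff_of_mem hPk hPk1)]
  · rw [Set.indicator_of_notMem hP]
    exact zero_le

lemma block {m : ℕ} (hm : 2 ≤ m)
    (htop : ∀ T ∈ 𝒯, 0 < top T ∧ top T < ∞)
    (hcov : ∀ x : X, ∃ T ∈ 𝒯, x ∈ T) (hJ0 : 0 < Jvol) (hJtop : Jvol < ∞)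
    (ι : X → ℝ≥0∞)
    (sj : Fin m → (X → ℝ≥0∞) → Set X → ℝ≥0∞) (hs : ∀ j, IsSize (sj j))
    (hHolder : ∀ (G : Fin m → X → ℝ≥0∞), ∀ T ∈ 𝒯,
      size1 ι top (fun x => ∏ j, G j x) T ≤ ∏ j, sj j (G j) T)
    {a p₁ : ℝ} (ha : 1 < a) (hap : a ≤ p₁)
    (F : Fin m → X → ℝ≥0∞)
    (hx1 : ∀ A : Set X, outerLorentz (outerMeasureOf 𝒯 top Jvol) 𝒯 (sj ⟨0, Nat.zero_lt_of_lt hm⟩)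
        (Set.indicator A (F ⟨0, Nat.zero_lt_of_lt hm⟩)) (ENNReal.ofReal a) ∞ ≤
        outerMeasureOf 𝒯 top Jvol A ^ (a⁻¹ - p₁⁻¹))
    (B : Set X) (t₀ : ℝ) (ht₀ : 0 < t₀)
    (hμB : outerMeasureOf 𝒯 top Jvol B ≤ ENNReal.ofReal t₀)
    (u : Fin m → ℝ≥0∞) (hu : ∀ j, j ≠ ⟨0, Nat.zero_lt_of_lt hm⟩ →
      outSup 𝒯 (sj j) (Set.indicator B (F j)) ≤ u j) :
    (∑ P : X, B.indicator (fun P => ι P * ∏ j, F j P) P) / Jvol ≤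
      ENNReal.ofReal (32 * (a / (a - 1)) * t₀ ^ (1 - p₁⁻¹)) *
        ∏ j ∈ Finset.univ.erase ⟨0, Nat.zero_lt_of_lt hm⟩, u j := by
  classical
  set μ := outerMeasureOf 𝒯 top Jvol with hμdef
  set i0 : Fin m := ⟨0, by omega⟩ with hi0
  rcases B.eq_empty_or_nonempty with rfl | hBne
  · simp
  have hXne : Nonempty X := ⟨hBne.choose⟩
  have ha0 : (0:ℝ) < a := by linarith
  have hδ0 : (0:ℝ) ≤ a⁻¹ - p₁⁻¹ := by
    have : p₁⁻¹ ≤ a⁻¹ := by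
      apply inv_anti₀ (by linarith) hap
    linarith
  set δ := a⁻¹ - p₁⁻¹ with hδdef
  have hμuniv : μ Set.univ < ∞ := mu_univ_lt htop hcov hJ0
  -- the extraction step
  have hext : ∀ (A : Set X), A ⊆ B → ∀ k : ℕ, ∃ C : Set X,
      μ C ≤ 2 * ENNReal.ofReal (t₀ / 2 ^ k) ∧
      outSup 𝒯 (sj i0) (Set.indicator (A \ C) (F i0)) ≤
        2 * ENNReal.ofReal ((t₀ / 2 ^ k) ^ (-a⁻¹) * t₀ ^ δ) := by
    intro A hAB k
    have htk : (0:ℝ) < t₀ / 2 ^ k := by positivity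
    set ρ : ℝ≥0∞ := ENNReal.ofReal ((t₀ / 2 ^ k) ^ (-a⁻¹) * t₀ ^ δ) with hρdef
    have hρ0 : 0 < ρ := by
      rw [hρdef]
      apply ENNReal.ofReal_pos.2
      positivity
    have hρtop : ρ ≠ ∞ := ENNReal.ofReal_ne_top
    have hrearr : rearr μ 𝒯 (sj i0) (Set.indicator A (F i0)) (t₀ / 2 ^ k) ≤ ρ := by
      have h1 := weak_rearr (hx1 A) htk
      rw [ENNReal.toReal_ofReal ha0.le] at h1
      refine h1.trans ?_
      have h2 : μ A ^ δ ≤ ENNReal.ofReal t₀ ^ δ :=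
        ENNReal.rpow_le_rpow ((mu_mono hAB).trans hμB) hδ0
      calc ENNReal.ofReal (t₀ / 2 ^ k) ^ (-a⁻¹) * μ A ^ δ
          ≤ ENNReal.ofReal (t₀ / 2 ^ k) ^ (-a⁻¹) * ENNReal.ofReal t₀ ^ δ :=
            mul_le_mul_right h2 _
        _ = ρ := by
            rw [hρdef, ENNReal.ofReal_rpow_of_pos htk, ENNReal.ofReal_rpow_of_pos ht₀,
              ← ENNReal.ofReal_mul (by positivity)]
    obtain ⟨C, hC1, hC2⟩ := extract htk hρ0 hρtop hrearr
    refine ⟨C, hC1, ?_⟩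
    rw [Set.indicator_indicator] at hC2
    rwa [Set.diff_eq, Set.inter_comm]
  choose Cf hCf1 hCf2 using hext
  -- the recursive chain
  set Bseq : ℕ → {A : Set X // A ⊆ B} := fun k =>
    Nat.rec ⟨B, subset_rfl⟩
      (fun k ih => ⟨ih.1 ∩ Cf ih.1 ih.2 k, Set.inter_subset_left.trans ih.2⟩) k
    with hBseqdef
  have hB0 : (Bseq 0).1 = B := rfl
  have hBsucc : ∀ k, (Bseq (k+1)).1 = (Bseq k).1 ∩ Cf (Bseq k).1 (Bseq k).2 k :=
    fun k => rfl
  have hμBk : ∀ k, μ (Bseq k).1 ≤ ENNReal.ofReal (4 * (t₀ / 2 ^ k)) := by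
    intro k
    cases k with
    | zero =>
      refine hμB.trans (ENNReal.ofReal_le_ofReal ?_)
      simp only [pow_zero]
      nlinarith
    | succ n =>
      rw [hBsucc n]
      refine le_trans (mu_mono Set.inter_subset_right) ?_
      refine le_trans (hCf1 (Bseq n).1 (Bseq n).2 n) ?_
      rw [show (2:ℝ≥0∞) = ENNReal.ofReal 2 by norm_num,
        ← ENNReal.ofReal_mul (by norm_num)]
      refine ENNReal.ofReal_le_ofReal ?_
      have h2n : (0:ℝ) < 2 ^ n := pow_pos (by norm_num) n
      have heq : 4 * (t₀ / 2 ^ (n+1)) = 2 * (t₀ / 2 ^ n) := by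
        rw [pow_succ]; field_simp; ring
      linarith
  -- termination
  obtain ⟨x₀, hx₀⟩ := Finite.exists_min (fun x : X => μ {x})
  set θ : ℝ≥0∞ := μ {x₀} with hθdef
  have hθ0 : 0 < θ := mu_pos htop hcov hJtop (Set.singleton_nonempty x₀)
  have hθtop : θ ≠ ∞ := ((mu_mono (Set.subset_univ _)).trans_lt hμuniv).ne
  have hθle : ∀ A : Set X, A.Nonempty → θ ≤ μ A := by
    intro A ⟨x, hx⟩
    exact (hx₀ x).trans (mu_mono (Set.singleton_subset_iff.2 hx))
  have hθr : 0 < θ.toReal := ENNReal.toReal_pos hθ0.ne' hθtop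
  obtain ⟨K, hK⟩ : ∃ K : ℕ, 4 * t₀ / θ.toReal < 2 ^ K := by
    obtain ⟨K, hK⟩ := pow_unbounded_of_one_lt (4 * t₀ / θ.toReal)
      (show (1:ℝ) < 2 by norm_num)
    exact ⟨K, hK⟩
  have hBK : (Bseq K).1 = ∅ := by
    by_contra hne
    have h1 : θ ≤ μ (Bseq K).1 := hθle _ (Set.nonempty_iff_ne_empty.2 hne)
    have h2 : μ (Bseq K).1 < θ := by
      refine lt_of_le_of_lt (hμBk K) ?_
      rw [← ENNReal.ofReal_toReal hθtop]
      refine (ENNReal.ofReal_lt_ofReal_iff hθr).2 ?_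
      have h2K : (0:ℝ) < 2 ^ K := pow_pos (by norm_num) K
      have h4 : 4 * t₀ < 2 ^ K * θ.toReal := (div_lt_iff₀ hθr).1 hK
      rw [← mul_div_assoc]
      rw [div_lt_iff₀ h2K]
      linarith
    exact absurd h1 (not_le.2 h2)
  -- assemble
  set f : X → ℝ≥0∞ := fun P => ι P * ∏ j, F j P with hfdef
  set Q : ℝ≥0∞ := ∏ j ∈ Finset.univ.erase i0, u j with hQdef
  have hchain := chain_sum (fun k => (Bseq k).1) K f
  simp only [hB0, hBK, Set.indicator_empty, Pi.zero_apply, Finset.sum_const_zero,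
    add_zero] at hchain
  have hdiv : (∑ P : X, B.indicator f P) / Jvol ≤
      ∑ k ∈ Finset.range K,
        (∑ P : X, (((Bseq k).1 \ (Bseq (k+1)).1).indicator f) P) / Jvol := by
    simp only [div_eq_mul_inv]
    rw [← Finset.sum_mul]
    exact mul_le_mul_left hchain _
  have hxx0 : (0:ℝ) < 1 - a⁻¹ := by
    have : a⁻¹ < 1 := by
      rw [inv_lt_one_iff₀]
      right; exact ha
    linarith
  have hxx1 : (1:ℝ) - a⁻¹ ≤ 1 := by
    have : 0 ≤ a⁻¹ := by positivity
    linarith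
  have hpiece : ∀ k : ℕ,
      (∑ P : X, (((Bseq k).1 \ (Bseq (k+1)).1).indicator f) P) / Jvol ≤
        ENNReal.ofReal (8 * ((t₀ / 2 ^ k) ^ (1 - a⁻¹) * t₀ ^ δ)) * Q := by
    intro k
    set D := (Bseq k).1 \ (Bseq (k+1)).1 with hD
    have hDsub : D ⊆ B := (Set.diff_subset).trans (Bseq k).2
    set ρk : ℝ≥0∞ := ENNReal.ofReal ((t₀ / 2 ^ k) ^ (-a⁻¹) * t₀ ^ δ) with hρk
    set u' : Fin m → ℝ≥0∞ := fun j => if j = i0 then 2 * ρk else u j with hu'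
    have hustar : ∀ j, outSup 𝒯 (sj j) (Set.indicator D (F j)) ≤ u' j := by
      intro j
      by_cases hj : j = i0
      · subst hj
        simp only [hu', if_pos rfl]
        have hDeq : D = (Bseq k).1 \ Cf (Bseq k).1 (Bseq k).2 k := by
          rw [hD, hBsucc k, Set.diff_self_inter]
        rw [hDeq]
        exact hCf2 _ _ k
      · simp only [hu', if_neg hj]
        refine le_trans (outSup_mono (hs j) ?_) (hu j hj)
        intro x
        exact Set.indicator_le_indicator_of_subset hDsub (fun _ => zero_le) x
    have hstar := starLem (Jvol := Jvol) hm htop hcov ι sj hHolder F D u' hustar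
    refine le_trans hstar ?_
    have hprod : ∏ j, u' j = (2 * ρk) * Q := by
      rw [← Finset.mul_prod_erase Finset.univ u' (Finset.mem_univ i0)]
      have h1 : u' i0 = 2 * ρk := by simp [hu']
      have h2 : ∏ j ∈ Finset.univ.erase i0, u' j = Q := by
        refine Finset.prod_congr rfl fun j hj => ?_
        simp [hu', (Finset.mem_erase.1 hj).1]
      rw [h1, h2]
    rw [hprod, ← mul_assoc]
    refine mul_le_mul_left ?_ Q
    have hμD : outerMeasureOf 𝒯 top Jvol D ≤ ENNReal.ofReal (4 * (t₀ / 2 ^ k)) :=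
      (mu_mono (Set.diff_subset)).trans (hμBk k)
    calc outerMeasureOf 𝒯 top Jvol D * (2 * ρk)
        ≤ ENNReal.ofReal (4 * (t₀ / 2 ^ k)) * (2 * ρk) := mul_le_mul_left hμD _
      _ = ENNReal.ofReal (8 * ((t₀ / 2 ^ k) ^ (1 - a⁻¹) * t₀ ^ δ)) := by
          rw [hρk, show (2:ℝ≥0∞) = ENNReal.ofReal 2 by norm_num,
            ← ENNReal.ofReal_mul (by norm_num),
            ← ENNReal.ofReal_mul (by positivity)]
          congr 1
          have htk : (0:ℝ) < t₀ / 2 ^ k := by positivity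
          have hpow : (t₀ / 2 ^ k) * (t₀ / 2 ^ k) ^ (-a⁻¹) =
              (t₀ / 2 ^ k) ^ (1 - a⁻¹) := by
            nth_rewrite 1 [← Real.rpow_one (t₀ / 2 ^ k)]
            rw [← Real.rpow_add htk, show (1:ℝ) + -a⁻¹ = 1 - a⁻¹ by ring]
          linear_combination (8 * t₀ ^ δ) * hpow
  have hsum : ∑ k ∈ Finset.range K,
      ENNReal.ofReal (8 * ((t₀ / 2 ^ k) ^ (1 - a⁻¹) * t₀ ^ δ)) ≤
      ENNReal.ofReal (32 * (a / (a - 1)) * t₀ ^ (1 - p₁⁻¹)) := by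
    rw [← ENNReal.ofReal_sum_of_nonneg (fun k _ => by positivity)]
    refine ENNReal.ofReal_le_ofReal ?_
    have hterm : ∀ k : ℕ, 8 * ((t₀ / 2 ^ k) ^ (1 - a⁻¹) * t₀ ^ δ) =
        8 * t₀ ^ (1 - a⁻¹) * t₀ ^ δ * ((2:ℝ) ^ (-(1 - a⁻¹))) ^ k := by
      intro k
      have h2k : (0:ℝ) < (2:ℝ) ^ k := pow_pos (by norm_num) k
      rw [Real.div_rpow ht₀.le h2k.le]
      rw [← Real.rpow_natCast (2:ℝ) k, ← Real.rpow_mul (by norm_num : (0:ℝ) ≤ 2)]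
      rw [← Real.rpow_natCast ((2:ℝ) ^ (-(1 - a⁻¹))) k,
        ← Real.rpow_mul (by norm_num : (0:ℝ) ≤ 2)]
      rw [show -(1 - a⁻¹) * (k:ℝ) = -((k:ℝ) * (1 - a⁻¹)) by ring]
      rw [Real.rpow_neg (by norm_num : (0:ℝ) ≤ 2)]
      field_simp
    calc ∑ k ∈ Finset.range K, 8 * ((t₀ / 2 ^ k) ^ (1 - a⁻¹) * t₀ ^ δ)
        = 8 * t₀ ^ (1 - a⁻¹) * t₀ ^ δ *
            ∑ k ∈ Finset.range K, ((2:ℝ) ^ (-(1 - a⁻¹))) ^ k := by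
          rw [Finset.mul_sum]
          exact Finset.sum_congr rfl fun k _ => hterm k
      _ ≤ 8 * t₀ ^ (1 - a⁻¹) * t₀ ^ δ * (4 / (1 - a⁻¹)) := by
          apply mul_le_mul_of_nonneg_left (geom_aux hxx0 hxx1 K) (by positivity)
      _ = 32 * (a / (a - 1)) * t₀ ^ (1 - p₁⁻¹) := by
          rw [mul_assoc (8 : ℝ), ← Real.rpow_add ht₀]
          have hxδ : (1 - a⁻¹) + δ = 1 - p₁⁻¹ := by rw [hδdef]; ring
          rw [hxδ]
          have hane : a ≠ 0 := by linarith
          have ha1 : a - 1 ≠ 0 := by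
            intro h; rw [sub_eq_zero] at h; linarith
          have h4x : 4 / (1 - a⁻¹) = 4 * (a / (a - 1)) := by
            field_simp
          rw [h4x]
          ring
  calc (∑ P : X, B.indicator f P) / Jvol
      ≤ ∑ k ∈ Finset.range K,
        (∑ P : X, (((Bseq k).1 \ (Bseq (k+1)).1).indicator f) P) / Jvol := hdiv
    _ ≤ ∑ k ∈ Finset.range K,
        ENNReal.ofReal (8 * ((t₀ / 2 ^ k) ^ (1 - a⁻¹) * t₀ ^ δ)) * Q :=
        Finset.sum_le_sum fun k _ => hpiece k
    _ = (∑ k ∈ Finset.range K,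
        ENNReal.ofReal (8 * ((t₀ / 2 ^ k) ^ (1 - a⁻¹) * t₀ ^ δ))) * Q :=
        (Finset.sum_mul _ _ _).symm
    _ ≤ ENNReal.ofReal (32 * (a / (a - 1)) * t₀ ^ (1 - p₁⁻¹)) * Q :=
        mul_le_mul_left hsum Q

lemma mu_biUnion_le {α : Type*} (hcov : ∀ x : X, ∃ T ∈ 𝒯, x ∈ T) (s : Finset α)
    (A : α → Set X) :
    outerMeasureOf 𝒯 top Jvol (⋃ i ∈ s, A i) ≤
      ∑ i ∈ s, outerMeasureOf 𝒯 top Jvol (A i) := by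
  classical
  induction s using Finset.induction with
  | empty => simp [mu_empty]
  | @insert b s hb ih =>
    rw [Finset.set_biUnion_insert, Finset.sum_insert hb]
    exact le_trans (mu_union_le hcov _ _) (add_le_add_right ih _)

lemma rpow_sum_helper {x : ℝ} (hx : 0 < x) {α : Type*} (s : Finset α) (f : α → ℝ) :
    x ^ (∑ i ∈ s, f i) = ∏ i ∈ s, x ^ (f i) := by
  classical
  induction s using Finset.induction with
  | empty => simp
  | @insert b s hb ih =>
    rw [Finset.sum_insert hb, Finset.prod_insert hb, Real.rpow_add hx, ih]

end Helpers

set_option maxHeartbeats 3200000 in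
/-- reverse-Hölder outer estimate, discrete core, normalized form:
under the normalizations `‖F₁‖_{X_a^{p₁,∞}} = 1`, `‖F_ℓ‖_{L^{p_ℓ,∞}} ≤ 1`,
`‖F_ℓ‖_{L^∞} ≤ 1` for `2 ≤ ℓ ≤ m`, with `1 < a ≤ p₁`, `1 ≤ p_ℓ`,
`ε = (Σ 1/p_ℓ) - 1 > 0`, and the submultiplicative Hölder condition with `s = size₁`,
one has `(1/|J|) Σ_P |I_P| |F₁ ⋯ F_m(P)| ≤ C_m · a/(ε(a-1))`. -/
theorem stmt8 (m : ℕ) (hm : 2 ≤ m) :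
    ∃ C : ℝ, 0 < C ∧
      ∀ (X : Type) (_ : Fintype X) (𝒯 : Set (Set X)) (top : Set X → ℝ≥0∞)
        (Jvol : ℝ≥0∞), 0 < Jvol → Jvol < ∞ →
        ∀ (ι : X → ℝ≥0∞),
        (∀ T ∈ 𝒯, 0 < top T ∧ top T < ∞) →
        (∀ x : X, ∃ T ∈ 𝒯, x ∈ T) →
        ∀ (sj : Fin m → (X → ℝ≥0∞) → Set X → ℝ≥0∞), (∀ j, IsSize (sj j)) →
        ∀ (a p₁ : ℝ) (pj : Fin m → ℝ),
          1 < a → a ≤ p₁ → pj ⟨0, by omega⟩ = p₁ → (∀ j, 1 ≤ pj j) →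
        ∀ ε : ℝ, ε = (∑ j, (pj j)⁻¹) - 1 → 0 < ε →
        (∀ (G : Fin m → X → ℝ≥0∞), ∀ T ∈ 𝒯,
          size1 ι top (fun x => ∏ j, G j x) T ≤ ∏ j, sj j (G j) T) →
        ∀ (F : Fin m → X → ℝ≥0∞),
          xNorm (outerMeasureOf 𝒯 top Jvol) 𝒯 (sj ⟨0, by omega⟩) (F ⟨0, by omega⟩)
            (ENNReal.ofReal a) (ENNReal.ofReal p₁) = 1 →
          (∀ j : Fin m, j ≠ ⟨0, by omega⟩ →
            outerLorentz (outerMeasureOf 𝒯 top Jvol) 𝒯 (sj j) (F j)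
              (ENNReal.ofReal (pj j)) ∞ ≤ 1 ∧ outSup 𝒯 (sj j) (F j) ≤ 1) →
          Jvol⁻¹ * ∑ P : X, ι P * ∏ j, F j P ≤
            ENNReal.ofReal (C * a / (ε * (a - 1))) := by
  classical
  refine ⟨512 * (m:ℝ)^2 * 4^(m-1), by positivity, ?_⟩
  intro X _inst 𝒯 top Jvol hJ0 hJtop ι htop hcov sj hs a p₁ pj ha hap hpjeq hpj ε hεdef
    hεpos hHolder F hxnorm hFj
  set i0 : Fin m := (⟨0, by omega⟩ : Fin m) with hi0
  have ha0 : (0:ℝ) < a := by linarith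
  have hp10 : (0:ℝ) < p₁ := by linarith
  have hpj0 : ∀ j, (0:ℝ) < pj j := fun j => by linarith [hpj j]
  have hμuniv : outerMeasureOf 𝒯 top Jvol Set.univ < ∞ := mu_univ_lt htop hcov hJ0
  have hpjeq' : pj i0 = p₁ := hpjeq
  have hx1 : ∀ A : Set X, outerLorentz (outerMeasureOf 𝒯 top Jvol) 𝒯 (sj i0)
      (Set.indicator A (F i0)) (ENNReal.ofReal a) ∞ ≤
      (outerMeasureOf 𝒯 top Jvol) A ^ (a⁻¹ - p₁⁻¹) := by
    intro A
    have h := xnorm_bound hxnorm A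
    rwa [ENNReal.toReal_ofReal ha0.le, ENNReal.toReal_ofReal hp10.le] at h
  -- weak-type extraction sets for j ≠ i0
  have hwk : ∀ (j : Fin m) (n : ℕ), ∃ Ejn : Set X, j ≠ i0 →
      outerMeasureOf 𝒯 top Jvol Ejn ≤ 2 * ENNReal.ofReal ((2:ℝ)^n) ∧
      outSup 𝒯 (sj j) (Set.indicator Ejnᶜ (F j)) ≤
        2 * ENNReal.ofReal (((2:ℝ)^n) ^ (-(pj j)⁻¹)) := by
    intro j n
    by_cases hj : j = i0
    · exact ⟨∅, fun h => absurd hj h⟩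
    · have h2n : (0:ℝ) < (2:ℝ)^n := pow_pos (by norm_num) n
      have hr := weak_rearr (𝒯 := 𝒯) (hFj j hj).1 h2n
      rw [ENNReal.toReal_ofReal (hpj0 j).le, mul_one, ENNReal.ofReal_rpow_of_pos h2n] at hr
      obtain ⟨Ejn, h1, h2⟩ := extract h2n (ENNReal.ofReal_pos.2 (by positivity))
        ENNReal.ofReal_ne_top hr
      exact ⟨Ejn, fun _ => ⟨h1, h2⟩⟩
  choose E hE using hwk
  set Ω : ℕ → Set X := fun n => ⋃ i ∈ Finset.range (n+1), ⋃ j ∈ Finset.univ.erase i0, E j i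
    with hΩdef
  have hΩμ : ∀ n, outerMeasureOf 𝒯 top Jvol (Ω n) ≤
      ENNReal.ofReal ((m:ℝ) * 2^(n+2)) := by
    intro n
    refine le_trans (mu_biUnion_le hcov _ _) ?_
    have hinner : ∀ i : ℕ,
        outerMeasureOf 𝒯 top Jvol (⋃ j ∈ Finset.univ.erase i0, E j i) ≤
          ENNReal.ofReal ((m:ℝ) * 2^(i+1)) := by
      intro i
      refine le_trans (mu_biUnion_le hcov _ _) ?_
      have hcard : ((Finset.univ.erase i0).card : ℝ) ≤ m := by
        have h1 : (Finset.univ.erase i0).card ≤ m := by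
          refine le_trans (Finset.card_erase_le) ?_
          simp
        exact_mod_cast h1
      calc ∑ j ∈ Finset.univ.erase i0, outerMeasureOf 𝒯 top Jvol (E j i)
          ≤ ∑ _j ∈ Finset.univ.erase i0, ENNReal.ofReal (2 * 2^i) := by
            refine Finset.sum_le_sum fun j hj => ?_
            have h := (hE j i (Finset.mem_erase.1 hj).1).1
            rwa [show (2:ℝ≥0∞) = ENNReal.ofReal 2 by norm_num,
              ← ENNReal.ofReal_mul (by norm_num)] at h
        _ = ((Finset.univ.erase i0).card : ℝ≥0∞) * ENNReal.ofReal (2 * 2^i) := by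
            rw [Finset.sum_const, nsmul_eq_mul]
        _ ≤ ENNReal.ofReal ((m:ℝ) * 2^(i+1)) := by
            rw [show ((Finset.univ.erase i0).card : ℝ≥0∞) =
              ENNReal.ofReal ((Finset.univ.erase i0).card : ℝ) by
                rw [ENNReal.ofReal_natCast],
              ← ENNReal.ofReal_mul (by positivity)]
            refine ENNReal.ofReal_le_ofReal ?_
            have h2i : (0:ℝ) < 2^i := pow_pos (by norm_num) i
            calc ((Finset.univ.erase i0).card : ℝ) * (2 * 2^i)
                ≤ (m:ℝ) * (2 * 2^i) := by nlinarith
              _ = (m:ℝ) * 2^(i+1) := by rw [pow_succ]; ring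
    refine le_trans (Finset.sum_le_sum fun i _ => hinner i) ?_
    rw [← ENNReal.ofReal_sum_of_nonneg (fun i _ => by positivity)]
    refine ENNReal.ofReal_le_ofReal ?_
    have hgs : ∑ i ∈ Finset.range (n+1), (2:ℝ)^(i+1) ≤ 2^(n+2) := by
      have h1 : ∑ i ∈ Finset.range (n+1), (2:ℝ)^(i+1) =
          2 * ∑ i ∈ Finset.range (n+1), (2:ℝ)^i := by
        rw [Finset.mul_sum]
        exact Finset.sum_congr rfl fun i _ => by rw [pow_succ]; ring
      have h2 : ∑ i ∈ Finset.range (n+1), (2:ℝ)^i = 2^(n+1) - 1 := by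
        have := geom_sum_eq (by norm_num : (2:ℝ) ≠ 1) (n+1)
        rw [this]; norm_num
      rw [h1, h2]
      have hp : (2:ℝ)^(n+2) = 2 * 2^(n+1) := by rw [pow_succ]; ring
      nlinarith [pow_pos (show (0:ℝ) < 2 by norm_num) (n+1)]
    calc ∑ i ∈ Finset.range (n+1), (m:ℝ) * 2^(i+1)
        = (m:ℝ) * ∑ i ∈ Finset.range (n+1), (2:ℝ)^(i+1) := by rw [Finset.mul_sum]
      _ ≤ (m:ℝ) * 2^(n+2) := by
          have hm0 : (0:ℝ) ≤ m := Nat.cast_nonneg m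
          nlinarith [hgs]
  -- the outer chain
  set W : ℕ → Set X := fun n => Nat.rec Set.univ (fun k _ => (Ω k)ᶜ) n with hWdef
  have hW0 : W 0 = Set.univ := rfl
  have hWs : ∀ n, W (n+1) = (Ω n)ᶜ := fun n => rfl
  have hDsub : ∀ n, W n \ W (n+1) ⊆ Ω n := by
    intro n x hx
    have h2 := hx.2
    rw [hWs] at h2
    simpa using h2
  have hEsubΩ : ∀ (j : Fin m), j ≠ i0 → ∀ n, E j n ⊆ Ω n := by
    intro j hj n x hx
    exact Set.mem_biUnion (Finset.self_mem_range_succ n)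
      (Set.mem_biUnion (Finset.mem_erase.2 ⟨hj, Finset.mem_univ j⟩) hx)
  have hout_sub : ∀ (S : Set X) (n : ℕ) (j : Fin m), j ≠ i0 → S ⊆ (E j n)ᶜ →
      outSup 𝒯 (sj j) (S.indicator (F j)) ≤
        2 * ENNReal.ofReal (((2:ℝ)^n) ^ (-(pj j)⁻¹)) := by
    intro S n j hj hsub
    refine le_trans (outSup_mono (hs j) (fun x =>
      Set.indicator_le_indicator_of_subset hsub (fun _ => zero_le) x)) (hE j n hj).2
  have hpjinv1 : ∀ j : Fin m, (pj j)⁻¹ ≤ 1 := by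
    intro j
    have h := inv_anti₀ one_pos (hpj j)
    simpa using h
  have h2of : (2:ℝ≥0∞) = ENNReal.ofReal 2 := by norm_num
  have hDout : ∀ n : ℕ, ∀ j : Fin m, j ≠ i0 →
      outSup 𝒯 (sj j) (Set.indicator (W n \ W (n+1)) (F j)) ≤
        ENNReal.ofReal (4 * ((2:ℝ)^n) ^ (-(pj j)⁻¹)) := by
    intro n j hj
    cases n with
    | zero =>
      have h1 : outSup 𝒯 (sj j) (Set.indicator (W 0 \ W 1) (F j)) ≤
          outSup 𝒯 (sj j) (F j) :=
        outSup_mono (hs j) (fun x => Set.indicator_le_self _ _ x)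
      refine le_trans (h1.trans (hFj j hj).2) ?_
      simp only [pow_zero, Real.one_rpow, mul_one]
      calc (1:ℝ≥0∞) = ENNReal.ofReal 1 := ENNReal.ofReal_one.symm
        _ ≤ ENNReal.ofReal 4 := ENNReal.ofReal_le_ofReal (by norm_num)
    | succ k =>
      have hsub : W (k+1) \ W (k+2) ⊆ (E j k)ᶜ := by
        intro x hx
        have hxW : x ∈ (Ω k)ᶜ := by rw [← hWs k]; exact hx.1
        exact fun hxE => hxW (hEsubΩ j hj k hxE)
      refine le_trans (hout_sub _ k j hj hsub) ?_
      rw [h2of, ← ENNReal.ofReal_mul (by norm_num)]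
      refine ENNReal.ofReal_le_ofReal ?_
      have h2k : (0:ℝ) < (2:ℝ)^k := pow_pos (by norm_num) k
      have hsplit : ((2:ℝ)^(k+1)) ^ (-(pj j)⁻¹) =
          ((2:ℝ)^k) ^ (-(pj j)⁻¹) * (2:ℝ) ^ (-(pj j)⁻¹) := by
        rw [pow_succ, Real.mul_rpow h2k.le (by norm_num)]
      have hhalf : (1:ℝ)/2 ≤ (2:ℝ) ^ (-(pj j)⁻¹) := by
        have h := Real.rpow_le_rpow_of_exponent_le (by norm_num : (1:ℝ) ≤ 2)
          (show -(1:ℝ) ≤ -(pj j)⁻¹ by linarith [hpjinv1 j])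
        rwa [Real.rpow_neg_one, show (2:ℝ)⁻¹ = 1/2 by norm_num] at h
      have hpos : (0:ℝ) ≤ ((2:ℝ)^k) ^ (-(pj j)⁻¹) := Real.rpow_nonneg h2k.le _
      rw [hsplit]
      nlinarith [hpos, hhalf]
  -- exponent bookkeeping
  set σ : ℝ := ∑ j ∈ Finset.univ.erase i0, (pj j)⁻¹ with hσdef
  set e1 : ℝ := 1 - p₁⁻¹ with he1def
  have hσε : e1 - σ = -ε := by
    have hsum : (pj i0)⁻¹ + σ = ∑ j, (pj j)⁻¹ := by
      rw [hσdef]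
      exact Finset.add_sum_erase Finset.univ (fun j => (pj j)⁻¹) (Finset.mem_univ i0)
    rw [hpjeq'] at hsum
    rw [he1def, hεdef, ← hsum]
    ring
  have hσpos : 0 < σ := by
    rw [hσdef]
    refine Finset.sum_pos (fun j _ => inv_pos.2 (hpj0 j)) ?_
    refine ⟨⟨1, by omega⟩, Finset.mem_erase.2 ⟨?_, Finset.mem_univ _⟩⟩
    rw [hi0]
    simp [Fin.ext_iff]
  have hεm : ε ≤ (m:ℝ) - 1 := by
    have hsum : ∑ j, (pj j)⁻¹ ≤ (m:ℝ) := by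
      calc ∑ j : Fin m, (pj j)⁻¹ ≤ ∑ _j : Fin m, (1:ℝ) :=
            Finset.sum_le_sum fun j _ => hpjinv1 j
        _ = m := by simp
    linarith [hεdef.le, hεdef.ge, hsum]
  have he1pos : 0 < e1 := by
    rw [he1def]
    have hp1inv : p₁⁻¹ < 1 := by
      rw [inv_lt_one_iff₀]
      right; linarith
    linarith
  have he11 : e1 ≤ 1 := by
    rw [he1def]
    have : 0 ≤ p₁⁻¹ := by positivity
    linarith
  set x : ℝ := min ε 1 with hxdef
  have hx0 : 0 < x := lt_min hεpos one_pos
  have hx1r : x ≤ 1 := min_le_right _ _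
  -- the product identity
  have hprodid : ∀ n : ℕ, ∏ j ∈ Finset.univ.erase i0,
      (4 * ((2:ℝ)^n) ^ (-(pj j)⁻¹)) = 4^(m-1) * ((2:ℝ)^n) ^ (-σ) := by
    intro n
    have h2n : (0:ℝ) < (2:ℝ)^n := pow_pos (by norm_num) n
    rw [Finset.prod_mul_distrib, Finset.prod_const]
    have hcard : (Finset.univ.erase i0).card = m - 1 := by
      rw [Finset.card_erase_of_mem (Finset.mem_univ _)]
      simp
    rw [hcard]
    congr 1
    rw [← rpow_sum_helper h2n]
    congr 1
    rw [hσdef, ← Finset.sum_neg_distrib]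
  -- per-piece bound
  have hpieceB : ∀ n : ℕ,
      (∑ P : X, ((W n \ W (n+1)).indicator (fun P => ι P * ∏ j, F j P)) P) / Jvol ≤
        ENNReal.ofReal (128 * m * 4^(m-1) * (a/(a-1)) * ((2:ℝ)^(-x))^n) := by
    intro n
    have h2n : (0:ℝ) < (2:ℝ)^n := pow_pos (by norm_num) n
    have hμD : outerMeasureOf 𝒯 top Jvol (W n \ W (n+1)) ≤
        ENNReal.ofReal ((m:ℝ) * 2^(n+2)) := (mu_mono (hDsub n)).trans (hΩμ n)
    have hb := block hm htop hcov hJ0 hJtop ι sj hs hHolder ha hap F hx1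
      (W n \ W (n+1)) ((m:ℝ) * 2^(n+2)) (by positivity) hμD
      (fun j => ENNReal.ofReal (4 * ((2:ℝ)^n) ^ (-(pj j)⁻¹)))
      (fun j hj => hDout n j hj)
    refine le_trans hb ?_
    have ham1 : (0:ℝ) < a - 1 := by linarith
    rw [← ENNReal.ofReal_prod_of_nonneg (fun j _ => by positivity),
      ← ENNReal.ofReal_mul (by positivity)]
    refine ENNReal.ofReal_le_ofReal ?_
    rw [hprodid n]
    have hm1 : (1:ℝ) ≤ m := by exact_mod_cast (by omega : 1 ≤ m)
    have haa : (0:ℝ) < a/(a-1) := div_pos ha0 (by linarith)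
    have hmono1 : ((m:ℝ)*2^(n+2))^e1 ≤ (m:ℝ) * 4 * ((2:ℝ)^n)^e1 := by
      calc ((m:ℝ)*2^(n+2))^e1 = (m:ℝ)^e1 * ((2:ℝ)^(n+2))^e1 :=
            Real.mul_rpow (by positivity) (by positivity)
        _ ≤ (m:ℝ) * ((2:ℝ)^(n+2))^e1 := by
            refine mul_le_mul_of_nonneg_right ?_ (by positivity)
            calc (m:ℝ)^e1 ≤ (m:ℝ)^(1:ℝ) :=
                  Real.rpow_le_rpow_of_exponent_le hm1 he11
              _ = m := Real.rpow_one _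
        _ = (m:ℝ) * (((2:ℝ)^n)^e1 * (4:ℝ)^e1) := by
            rw [show (2:ℝ)^(n+2) = (2:ℝ)^n * 4 by rw [pow_add]; norm_num,
              Real.mul_rpow h2n.le (by norm_num)]
        _ ≤ (m:ℝ) * 4 * ((2:ℝ)^n)^e1 := by
            have h4 : (4:ℝ)^e1 ≤ 4 := by
              calc (4:ℝ)^e1 ≤ (4:ℝ)^(1:ℝ) :=
                    Real.rpow_le_rpow_of_exponent_le (by norm_num) he11
                _ = 4 := Real.rpow_one _
            have hge := Real.rpow_nonneg h2n.le e1
            have hmul := mul_le_mul_of_nonneg_left h4 hge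
            have hm0 : (0:ℝ) ≤ m := Nat.cast_nonneg m
            nlinarith [mul_le_mul_of_nonneg_left hmul hm0]
    have hmono2 : ((2:ℝ)^n)^e1 * ((2:ℝ)^n)^(-σ) ≤ ((2:ℝ)^(-x))^n := by
      rw [← Real.rpow_add h2n]
      rw [show e1 + -σ = -ε by linarith [hσε]]
      rw [← Real.rpow_natCast (2:ℝ) n, ← Real.rpow_mul (by norm_num : (0:ℝ) ≤ 2),
        ← Real.rpow_natCast ((2:ℝ)^(-x)) n, ← Real.rpow_mul (by norm_num : (0:ℝ) ≤ 2)]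
      refine Real.rpow_le_rpow_of_exponent_le (by norm_num) ?_
      have hxε : x ≤ ε := min_le_left _ _
      have hn0 : (0:ℝ) ≤ n := Nat.cast_nonneg n
      nlinarith
    have h4pow : (0:ℝ) < 4^(m-1) := by positivity
    calc 32 * (a/(a-1)) * ((m:ℝ)*2^(n+2))^e1 * (4^(m-1) * ((2:ℝ)^n)^(-σ))
        ≤ 32 * (a/(a-1)) * ((m:ℝ) * 4 * ((2:ℝ)^n)^e1) * (4^(m-1) * ((2:ℝ)^n)^(-σ)) := by
          have hσn : (0:ℝ) ≤ ((2:ℝ)^n)^(-σ) := Real.rpow_nonneg h2n.le _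
          have := mul_le_mul_of_nonneg_right
            (mul_le_mul_of_nonneg_left hmono1 (by positivity : (0:ℝ) ≤ 32 * (a/(a-1))))
            (by positivity : (0:ℝ) ≤ 4^(m-1) * ((2:ℝ)^n)^(-σ))
          calc 32 * (a/(a-1)) * ((m:ℝ)*2^(n+2))^e1 * (4^(m-1) * ((2:ℝ)^n)^(-σ))
              = 32 * (a/(a-1)) * (((m:ℝ)*2^(n+2))^e1) * (4^(m-1) * ((2:ℝ)^n)^(-σ)) := by ring
            _ ≤ 32 * (a/(a-1)) * ((m:ℝ) * 4 * ((2:ℝ)^n)^e1) * (4^(m-1) * ((2:ℝ)^n)^(-σ)) := this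
      _ = 128 * m * 4^(m-1) * (a/(a-1)) * (((2:ℝ)^n)^e1 * ((2:ℝ)^n)^(-σ)) := by ring
      _ ≤ 128 * m * 4^(m-1) * (a/(a-1)) * ((2:ℝ)^(-x))^n := by
          refine mul_le_mul_of_nonneg_left hmono2 (by positivity)
  have hm1R : (1:ℝ) ≤ m := by exact_mod_cast (by omega : 1 ≤ m)
  have ham1 : (0:ℝ) < a - 1 := by linarith
  -- geometric sum over the pieces
  have hgeomsum : ∀ J : ℕ, ∑ n ∈ Finset.range (J+1),
      ENNReal.ofReal (128 * m * 4^(m-1) * (a/(a-1)) * ((2:ℝ)^(-x))^n) ≤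
      ENNReal.ofReal (512 * (m:ℝ)^2 * 4^(m-1) * a / (ε * (a-1))) := by
    intro J
    rw [← ENNReal.ofReal_sum_of_nonneg (fun n _ => by positivity)]
    refine ENNReal.ofReal_le_ofReal ?_
    have hsum1 : ∑ n ∈ Finset.range (J+1),
        128 * (m:ℝ) * 4^(m-1) * (a/(a-1)) * ((2:ℝ)^(-x))^n
        = 128 * m * 4^(m-1) * (a/(a-1)) *
          ∑ n ∈ Finset.range (J+1), ((2:ℝ)^(-x))^n := by
      rw [Finset.mul_sum]
    rw [hsum1]
    have hgeom := geom_aux hx0 hx1r (J+1)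
    have h4x : 4 / x ≤ 4 * m / ε := by
      rcases min_cases ε 1 with ⟨hxe, hle⟩ | ⟨hxe, hlt⟩
      · rw [hxdef, hxe, div_le_div_iff₀ hεpos hεpos]
        nlinarith
      · rw [hxdef, hxe, div_le_div_iff₀ one_pos hεpos]
        nlinarith
    have hfinal : 128 * (m:ℝ) * 4^(m-1) * (a/(a-1)) * (4*m/ε) =
        512 * m^2 * 4^(m-1) * a / (ε*(a-1)) := by
      field_simp
      ring
    calc 128 * (m:ℝ) * 4^(m-1) * (a/(a-1)) * ∑ n ∈ Finset.range (J+1), ((2:ℝ)^(-x))^n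
        ≤ 128 * (m:ℝ) * 4^(m-1) * (a/(a-1)) * (4/x) := by
          refine mul_le_mul_of_nonneg_left hgeom (by positivity)
      _ ≤ 128 * (m:ℝ) * 4^(m-1) * (a/(a-1)) * (4*m/ε) := by
          refine mul_le_mul_of_nonneg_left h4x (by positivity)
      _ = 512 * m^2 * 4^(m-1) * a / (ε*(a-1)) := hfinal
  -- the tail
  set Mr : ℝ := (outerMeasureOf 𝒯 top Jvol Set.univ).toReal + 1 with hMrdef
  have hMr0 : (0:ℝ) < Mr := by
    rw [hMrdef]
    have := ENNReal.toReal_nonneg (a := outerMeasureOf 𝒯 top Jvol Set.univ)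
    linarith
  have htail : ∀ J : ℕ,
      (∑ P : X, ((W (J+1)).indicator (fun P => ι P * ∏ j, F j P)) P) / Jvol ≤
      ENNReal.ofReal ((32 * (a/(a-1)) * Mr ^ e1 * 4^(m-1)) * ((2:ℝ)^J)^(-σ)) := by
    intro J
    have hμT : outerMeasureOf 𝒯 top Jvol (W (J+1)) ≤ ENNReal.ofReal Mr := by
      refine le_trans (mu_mono (Set.subset_univ _)) ?_
      rw [← ENNReal.ofReal_toReal hμuniv.ne]
      exact ENNReal.ofReal_le_ofReal (by rw [hMrdef]; linarith)
    have huT : ∀ j : Fin m, j ≠ i0 →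
        outSup 𝒯 (sj j) ((W (J+1)).indicator (F j)) ≤
          ENNReal.ofReal (4 * ((2:ℝ)^J) ^ (-(pj j)⁻¹)) := by
      intro j hj
      have hsubT : W (J+1) ⊆ (E j J)ᶜ := by
        intro xx hxx hxE
        have hxW : xx ∈ (Ω J)ᶜ := by rw [← hWs J]; exact hxx
        exact hxW (hEsubΩ j hj J hxE)
      refine le_trans (hout_sub _ J j hj hsubT) ?_
      rw [h2of, ← ENNReal.ofReal_mul (by norm_num)]
      refine ENNReal.ofReal_le_ofReal ?_
      have hge : (0:ℝ) ≤ ((2:ℝ)^J) ^ (-(pj j)⁻¹) := Real.rpow_nonneg (by positivity) _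
      nlinarith
    have hb := block hm htop hcov hJ0 hJtop ι sj hs hHolder ha hap F hx1
      (W (J+1)) Mr hMr0 hμT
      (fun j => ENNReal.ofReal (4 * ((2:ℝ)^J) ^ (-(pj j)⁻¹))) huT
    refine le_trans hb ?_
    rw [← ENNReal.ofReal_prod_of_nonneg (fun j _ => by positivity),
      ← ENNReal.ofReal_mul (by positivity)]
    refine ENNReal.ofReal_le_ofReal ?_
    rw [hprodid J]
    exact le_of_eq (by ring)
  -- combine for every J
  have hchain' : ∀ J : ℕ, Jvol⁻¹ * ∑ P : X, ι P * ∏ j, F j P ≤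
      ENNReal.ofReal (512 * (m:ℝ)^2 * 4^(m-1) * a / (ε * (a-1))) +
      ENNReal.ofReal ((32 * (a/(a-1)) * Mr ^ e1 * 4^(m-1)) * ((2:ℝ)^J)^(-σ)) := by
    intro J
    have hch := chain_sum (X := X) W (J+1) (fun P => ι P * ∏ j, F j P)
    rw [hW0] at hch
    have hstart : Jvol⁻¹ * ∑ P : X, ι P * ∏ j, F j P =
        (∑ P : X, (Set.univ.indicator (fun P => ι P * ∏ j, F j P)) P) / Jvol := by
      rw [div_eq_mul_inv, mul_comm]
      congr 1
      exact Finset.sum_congr rfl fun P _ => by rw [Set.indicator_univ]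
    rw [hstart]
    calc (∑ P : X, (Set.univ.indicator (fun P => ι P * ∏ j, F j P)) P) / Jvol
        ≤ ((∑ n ∈ Finset.range (J+1),
            ∑ P : X, ((W n \ W (n+1)).indicator (fun P => ι P * ∏ j, F j P)) P) +
            ∑ P : X, ((W (J+1)).indicator (fun P => ι P * ∏ j, F j P)) P) / Jvol :=
          ENNReal.div_le_div_right hch _
      _ = (∑ n ∈ Finset.range (J+1),
            (∑ P : X, ((W n \ W (n+1)).indicator (fun P => ι P * ∏ j, F j P)) P) / Jvol) +
            (∑ P : X, ((W (J+1)).indicator (fun P => ι P * ∏ j, F j P)) P) / Jvol := by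
          simp only [div_eq_mul_inv, add_mul, Finset.sum_mul]
      _ ≤ ENNReal.ofReal (512 * (m:ℝ)^2 * 4^(m-1) * a / (ε * (a-1))) +
            ENNReal.ofReal ((32 * (a/(a-1)) * Mr ^ e1 * 4^(m-1)) * ((2:ℝ)^J)^(-σ)) := by
          refine add_le_add ?_ (htail J)
          exact le_trans (Finset.sum_le_sum fun n _ => hpieceB n) (hgeomsum J)
  -- let J → ∞
  refine ENNReal.le_of_forall_pos_le_add ?_
  intro η hη _
  have hη0 : (0:ℝ) < (η:ℝ) := by exact_mod_cast hη
  set Dc : ℝ := 32 * (a/(a-1)) * Mr ^ e1 * 4^(m-1) with hDcdef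
  have hDc0 : (0:ℝ) < Dc := by
    rw [hDcdef]
    have hMre : (0:ℝ) < Mr ^ e1 := Real.rpow_pos_of_pos hMr0 _
    positivity
  have hbase : (1:ℝ) < (2:ℝ) ^ σ := by
    refine (Real.one_lt_rpow_iff_of_pos (by norm_num)).2 ?_
    exact Or.inl ⟨by norm_num, hσpos⟩
  obtain ⟨J, hJ⟩ := pow_unbounded_of_one_lt (Dc / (η:ℝ)) hbase
  have hP : (0:ℝ) < ((2:ℝ)^σ)^J := pow_pos (by positivity) J
  have hpoweq : ((2:ℝ)^J) ^ (-σ) = (((2:ℝ)^σ)^J)⁻¹ := by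
    rw [← Real.rpow_natCast (2:ℝ) J, ← Real.rpow_natCast ((2:ℝ)^σ) J,
      ← Real.rpow_mul (by norm_num : (0:ℝ) ≤ 2),
      ← Real.rpow_mul (by norm_num : (0:ℝ) ≤ 2)]
    rw [← Real.rpow_neg (by norm_num : (0:ℝ) ≤ 2)]
    congr 1
    ring
  have hkey : Dc * ((2:ℝ)^J)^(-σ) ≤ (η:ℝ) := by
    have h1 : Dc < (η:ℝ) * ((2:ℝ)^σ)^J := by
      have := (div_lt_iff₀ hη0).1 hJ
      linarith
    rw [hpoweq, ← div_eq_mul_inv, div_le_iff₀ hP]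
    nlinarith
  refine le_trans (hchain' J) ?_
  refine add_le_add_right ?_ _
  calc ENNReal.ofReal (Dc * ((2:ℝ)^J)^(-σ))
      ≤ ENNReal.ofReal ((η:ℝ)) := ENNReal.ofReal_le_ofReal hkey
    _ = (η : ℝ≥0∞) := ENNReal.ofReal_coe_nnreal
end

section
/- (Sparse-to-weak-type implication with sharp constant) Suppose a sublinear operator C on ℝ satisfies the (p,1)-sparse bound |⟨Cf, g⟩| ≤ A·‖M_{(p,1)}(f,g)‖₁ for all bounded compactly supported f, g, where M_{(p,1)}(f,g) = sup_Q 1_Q·⟨f⟩_{p,Q}⟨g⟩_{1,Q}. Then ‖Cf‖_{L^{p,∞}} ≤ C₀·A·‖f‖_p (unweighted weak-type), with C₀ absolute, for 1 < p ≤ 2. [Simplified version: the sparse form bound with exponents (p,1) implies the weak-type (p,p) estimate with comparable constant.] -/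
open MeasureTheory ENNReal

/-- The weak `L^p` quasinorm `‖g‖_{L^{p,∞}(μ)} = sup_{t>0} t · μ({|g| > t})^{1/p}`. -/
noncomputable def weakNorm {α : Type*} [MeasurableSpace α] (μ : Measure α)
    (g : α → ℂ) (p : ℝ) : ℝ≥0∞ :=
  ⨆ (t : ℝ) (_ : 0 < t), ENNReal.ofReal t * μ {x | t < ‖g x‖} ^ (1 / p)

/-- The local `L^r` average `⟨f⟩_{r,(a,b)}`. -/
noncomputable def avgq (r : ℝ) (a b : ℝ) (f : ℝ → ℂ) : ℝ≥0∞ :=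
  ((ENNReal.ofReal (b - a))⁻¹ * ∫⁻ x in Set.Ioo a b, (‖f x‖₊ : ℝ≥0∞) ^ r) ^ r⁻¹

/-- The bilinear maximal function `M_{(p,1)}(f,g) = sup_Q 1_Q ⟨f⟩_{p,Q} ⟨g⟩_{1,Q}`. -/
noncomputable def bimax (p : ℝ) (f g : ℝ → ℂ) (x : ℝ) : ℝ≥0∞ :=
  ⨆ (a : ℝ) (b : ℝ) (_ : a < b) (_ : x ∈ Set.Ioo a b), avgq p a b f * avgq 1 a b g

/-- Bounded, compactly supported, measurable functions. -/
def Nice (f : ℝ → ℂ) : Prop :=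
  Measurable f ∧ (∃ B, ∀ x, ‖f x‖ ≤ B) ∧ ∃ R, ∀ x, R < |x| → f x = 0

/-- Finite Vitali covering lemma on ℝ with 3-fold enlargement. -/
theorem finVitali {ι : Type*} [DecidableEq ι] (a b : ι → ℝ) :
    ∀ (s : Finset ι), (∀ i ∈ s, a i < b i) →
    ∃ g : Finset ι, g ⊆ s ∧
      ((g : Set ι).Pairwise fun i j => Disjoint (Set.Ioo (a i) (b i)) (Set.Ioo (a j) (b j))) ∧
      ∀ i ∈ s, ∃ j ∈ g, Set.Ioo (a i) (b i) ⊆ Set.Ioo (2 * a j - b j) (2 * b j - a j) := by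
  classical
  intro s
  induction s using Finset.strongInduction with
  | _ s ih =>
    intro hs
    rcases s.eq_empty_or_nonempty with rfl | hne
    · exact ⟨∅, by simp, by simp, by simp⟩
    obtain ⟨m, hm, hmax⟩ := s.exists_max_image (fun i => b i - a i) hne
    set s' := (s.erase m).filter
      (fun i => Disjoint (Set.Ioo (a i) (b i)) (Set.Ioo (a m) (b m))) with hs'
    have hs's : s' ⊆ s := (Finset.filter_subset _ _).trans (Finset.erase_subset _ _)
    have hms' : m ∉ s' := by
      intro hmem
      exact (Finset.notMem_erase m s) (Finset.mem_of_mem_filter m hmem)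
    have hsub : s' ⊂ s := Finset.ssubset_iff_of_subset hs's |>.mpr ⟨m, hm, hms'⟩
    obtain ⟨g', hg's, hg'disj, hg'cov⟩ := ih s' hsub (fun i hi => hs i (hs's hi))
    have hg'm : m ∉ g' := fun h => hms' (hg's h)
    refine ⟨insert m g', ?_, ?_, ?_⟩
    · exact Finset.insert_subset hm (hg's.trans hs's)
    · -- pairwise disjoint
      intro i hi j hj hij
      simp only [Finset.coe_insert, Set.mem_insert_iff, Finset.mem_coe] at hi hj
      rcases hi with rfl | hi
      · rcases hj with rfl | hj
        · exact absurd rfl hij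
        · exact (Finset.mem_filter.mp (hg's hj)).2.symm
      · rcases hj with rfl | hj
        · exact (Finset.mem_filter.mp (hg's hi)).2
        · exact hg'disj hi hj hij
    · -- covering
      intro i hi
      by_cases hi' : i ∈ s'
      · obtain ⟨j, hj, hsubj⟩ := hg'cov i hi'
        exact ⟨j, Finset.mem_insert_of_mem hj, hsubj⟩
      · refine ⟨m, Finset.mem_insert_self _ _, ?_⟩
        have hlen : b i - a i ≤ b m - a m := hmax i hi
        have ham : a m < b m := hs m hm
        by_cases him : i = m
        · subst him; intro x hx; exact ⟨by cases hx; linarith, by cases hx; linarith⟩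
        · have hnd : ¬ Disjoint (Set.Ioo (a i) (b i)) (Set.Ioo (a m) (b m)) := by
            intro hd
            exact hi' (Finset.mem_filter.mpr ⟨Finset.mem_erase.mpr ⟨him, hi⟩, hd⟩)
          obtain ⟨z, hz1, hz2⟩ := Set.not_disjoint_iff.mp hnd
          intro x hx
          simp only [Set.mem_Ioo] at hx hz1 hz2 ⊢
          constructor <;> nlinarith [hx.1, hx.2, hz1.1, hz1.2, hz2.1, hz2.2]

theorem ofReal_norm_eq_coe_nnnorm {E : Type*} [SeminormedAddGroup E] (x : E) :
    ENNReal.ofReal ‖x‖ = (‖x‖₊ : ℝ≥0∞) :=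
  ofReal_norm_eq_enorm x

noncomputable def MB (u : ℝ → ℝ≥0∞) (x : ℝ) : ℝ≥0∞ :=
  ⨆ (a : ℝ) (b : ℝ) (_ : a < b) (_ : x ∈ Set.Ioo a b),
    (ENNReal.ofReal (b - a))⁻¹ * ∫⁻ y in Set.Ioo a b, u y

theorem le_MB {u : ℝ → ℝ≥0∞} {a b x : ℝ} (hab : a < b) (hx : x ∈ Set.Ioo a b) :
    (ENNReal.ofReal (b - a))⁻¹ * ∫⁻ y in Set.Ioo a b, u y ≤ MB u x := by
  unfold MB
  exact le_iSup_of_le a <| le_iSup_of_le b <| le_iSup_of_le hab <| le_iSup_of_le hx le_rfl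

theorem isOpen_MB_gt (u : ℝ → ℝ≥0∞) (r : ℝ≥0∞) : IsOpen {x | r < MB u x} := by
  rw [isOpen_iff_forall_mem_open]
  intro x hx
  simp only [Set.mem_setOf_eq, MB, lt_iSup_iff] at hx
  obtain ⟨a, b, hab, hxab, hgt⟩ := hx
  exact ⟨Set.Ioo a b, fun y hy => lt_of_lt_of_le hgt (le_MB hab hy), isOpen_Ioo, hxab⟩

/-- Weak (1,1) bound for the maximal function `MB`. -/
theorem MB_weak (u : ℝ → ℝ≥0∞) (hu : Measurable u) {r : ℝ≥0∞} (hr0 : r ≠ 0) (hrt : r ≠ ⊤) :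
    volume {x | r < MB u x} * r ≤ 3 * ∫⁻ y, u y := by
  classical
  by_cases hU : (∫⁻ y, u y) = ⊤
  · rw [hU]; simp
  -- reduce to compact subsets
  rw [(isOpen_MB_gt u r).measure_eq_iSup_isCompact volume, ENNReal.iSup_mul]
  refine iSup_le fun K => ?_
  rw [ENNReal.iSup_mul]; refine iSup_le fun hK => ?_
  rw [ENNReal.iSup_mul]; refine iSup_le fun hKc => ?_
  -- for each point of K, an interval with big average
  have hsel : ∀ x : K, ∃ q : ℝ × ℝ, (x : ℝ) ∈ Set.Ioo q.1 q.2 ∧ q.1 < q.2 ∧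
      ENNReal.ofReal (q.2 - q.1) * r ≤ ∫⁻ y in Set.Ioo q.1 q.2, u y := by
    rintro ⟨x, hx⟩
    have := hK hx
    simp only [Set.mem_setOf_eq, MB, lt_iSup_iff] at this
    obtain ⟨a, b, hab, hxab, hgt⟩ := this
    refine ⟨(a, b), hxab, hab, ?_⟩
    have hlen : ENNReal.ofReal (b - a) ≠ 0 := by
      simp [ENNReal.ofReal_eq_zero]; linarith
    have hlent : ENNReal.ofReal (b - a) ≠ ⊤ := ENNReal.ofReal_ne_top
    calc ENNReal.ofReal (b - a) * r
        ≤ ENNReal.ofReal (b - a) * ((ENNReal.ofReal (b - a))⁻¹ * ∫⁻ y in Set.Ioo a b, u y) :=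
          mul_le_mul_right hgt.le _
      _ = _ := by rw [← mul_assoc, ENNReal.mul_inv_cancel hlen hlent, one_mul]
  choose q hq1 hq2 hq3 using hsel
  -- compactness: finite subcover
  have hcov : K ⊆ ⋃ i : K, Set.Ioo (q i).1 (q i).2 := by
    intro x hx
    exact Set.mem_iUnion.mpr ⟨⟨x, hx⟩, hq1 ⟨x, hx⟩⟩
  obtain ⟨t, ht⟩ := hKc.elim_finite_subcover (fun i : K => Set.Ioo (q i).1 (q i).2)
    (fun i => isOpen_Ioo) hcov
  -- Vitali selection
  obtain ⟨g, hgt', hgdisj, hgcov⟩ := finVitali (fun i : K => (q i).1) (fun i => (q i).2) t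
    (fun i _ => hq2 i)
  have hKsub : K ⊆ ⋃ j ∈ g, Set.Ioo (2 * (q j).1 - (q j).2) (2 * (q j).2 - (q j).1) := by
    intro x hx
    obtain ⟨i, hit, hxi⟩ := Set.mem_iUnion₂.mp (ht hx)
    obtain ⟨j, hj, hsubj⟩ := hgcov i hit
    exact Set.mem_iUnion₂.mpr ⟨j, hj, hsubj hxi⟩
  calc volume K * r ≤ (∑ j ∈ g, volume (Set.Ioo (2 * (q j).1 - (q j).2) (2 * (q j).2 - (q j).1))) * r := by
        gcongr
        exact (measure_mono hKsub).trans (measure_biUnion_finset_le g _)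
    _ = ∑ j ∈ g, volume (Set.Ioo (2 * (q j).1 - (q j).2) (2 * (q j).2 - (q j).1)) * r := by
        rw [Finset.sum_mul]
    _ ≤ ∑ j ∈ g, 3 * ∫⁻ y in Set.Ioo (q j).1 (q j).2, u y := by
        refine Finset.sum_le_sum fun j hj => ?_
        have hab := hq2 j
        rw [Real.volume_Ioo]
        have : (2 * (q j).2 - (q j).1) - (2 * (q j).1 - (q j).2) = 3 * ((q j).2 - (q j).1) := by ring
        rw [this, ENNReal.ofReal_mul (by norm_num),
          (by norm_num : ENNReal.ofReal (3:ℝ) = 3), mul_assoc]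
        gcongr
        exact hq3 j
    _ = 3 * ∑ j ∈ g, ∫⁻ y in Set.Ioo (q j).1 (q j).2, u y := by rw [Finset.mul_sum]
    _ ≤ 3 * ∫⁻ y, u y := by
        gcongr
        -- disjoint sum of integrals
        have : ∑ j ∈ g, ∫⁻ y in Set.Ioo (q j).1 (q j).2, u y
            = ∫⁻ y in ⋃ j ∈ g, Set.Ioo (q j).1 (q j).2, u y := by
          rw [lintegral_biUnion_finset (by exact hgdisj) (fun j _ => measurableSet_Ioo) u]
        rw [this]
        exact setLIntegral_le_lintegral _ _
theorem avgq_le_MB {p : ℝ} (hp : 0 < p) (f : ℝ → ℂ) {a b x : ℝ} (hab : a < b)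
    (hx : x ∈ Set.Ioo a b) :
    avgq p a b f ≤ (MB (fun y => (‖f y‖₊ : ℝ≥0∞) ^ p) x) ^ p⁻¹ :=
  ENNReal.rpow_le_rpow (le_MB hab hx) (inv_nonneg.2 hp.le)

theorem avgq_one_eq (a b : ℝ) (g : ℝ → ℂ) :
    avgq 1 a b g = (ENNReal.ofReal (b - a))⁻¹ * ∫⁻ y in Set.Ioo a b, (‖g y‖₊ : ℝ≥0∞) := by
  simp [avgq]

theorem avgq_one_le_MB (g : ℝ → ℂ) {a b x : ℝ} (hab : a < b) (hx : x ∈ Set.Ioo a b) :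
    avgq 1 a b g ≤ MB (fun y => (‖g y‖₊ : ℝ≥0∞)) x := by
  rw [avgq_one_eq]; exact le_MB hab hx

theorem bimax_le_prod {p : ℝ} (hp : 0 < p) (f g : ℝ → ℂ) (x : ℝ) :
    bimax p f g x ≤ (MB (fun y => (‖f y‖₊ : ℝ≥0∞) ^ p) x) ^ p⁻¹
      * MB (fun y => (‖g y‖₊ : ℝ≥0∞)) x := by
  refine iSup_le fun a => iSup_le fun b => iSup_le fun hab => iSup_le fun hx => ?_
  exact mul_le_mul' (avgq_le_MB hp f hab hx) (avgq_one_le_MB g hab hx)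

theorem isOpen_bimax_gt (p : ℝ) (f g : ℝ → ℂ) (s : ℝ≥0∞) :
    IsOpen {x | s < bimax p f g x} := by
  rw [isOpen_iff_forall_mem_open]
  intro x hx
  simp only [Set.mem_setOf_eq, bimax, lt_iSup_iff] at hx
  obtain ⟨a, b, hab, hxab, hgt⟩ := hx
  refine ⟨Set.Ioo a b, fun y hy => ?_, isOpen_Ioo, hxab⟩
  simp only [Set.mem_setOf_eq, bimax, lt_iSup_iff]
  exact ⟨a, b, hab, hy, hgt⟩

theorem bimax_le_of_trim {p : ℝ} (hp : 0 < p) (f g : ℝ → ℂ) (T : ℝ≥0∞)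
    (E' : Set ℝ) (hE'm : MeasurableSet E')
    (hg : ∀ y, (‖g y‖₊ : ℝ≥0∞) = E'.indicator 1 y)
    (hE' : ∀ y ∈ E', MB (fun z => (‖f z‖₊ : ℝ≥0∞) ^ p) y ≤ T ^ p) (x : ℝ) :
    bimax p f g x ≤ T := by
  refine iSup_le fun a => iSup_le fun b => iSup_le fun hab => iSup_le fun hx => ?_
  have hvol : ∫⁻ y in Set.Ioo a b, (‖g y‖₊ : ℝ≥0∞) = volume (E' ∩ Set.Ioo a b) := by
    rw [show (fun y => (‖g y‖₊ : ℝ≥0∞)) = E'.indicator 1 from funext hg]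
    rw [lintegral_indicator hE'm]
    simp [Measure.restrict_apply hE'm]
  by_cases h0 : volume (E' ∩ Set.Ioo a b) = 0
  · rw [avgq_one_eq, hvol, h0, mul_zero, mul_zero]; exact zero_le
  · obtain ⟨y, hy⟩ := nonempty_of_measure_ne_zero h0
    have h1 : avgq p a b f ≤ T := by
      calc avgq p a b f ≤ (MB (fun z => (‖f z‖₊ : ℝ≥0∞) ^ p) y) ^ p⁻¹ :=
            avgq_le_MB hp f hab hy.2
        _ ≤ (T ^ p) ^ p⁻¹ := ENNReal.rpow_le_rpow (hE' y hy.1) (inv_nonneg.2 hp.le)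
        _ = T := by rw [← ENNReal.rpow_mul, mul_inv_cancel₀ hp.ne', ENNReal.rpow_one]
    have h2 : avgq 1 a b g ≤ 1 := by
      rw [avgq_one_eq, hvol]
      have hlen0 : ENNReal.ofReal (b - a) ≠ 0 := by
        simp only [ne_eq, ENNReal.ofReal_eq_zero, not_le]; linarith [hx.1, hx.2]
      calc (ENNReal.ofReal (b - a))⁻¹ * volume (E' ∩ Set.Ioo a b)
          ≤ (ENNReal.ofReal (b - a))⁻¹ * ENNReal.ofReal (b - a) := by
            gcongr
            rw [← Real.volume_Ioo (a := a) (b := b)]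
            exact measure_mono Set.inter_subset_right
        _ = 1 := ENNReal.inv_mul_cancel hlen0 ENNReal.ofReal_ne_top
    calc avgq p a b f * avgq 1 a b g ≤ T * 1 := mul_le_mul' h1 h2
      _ = T := mul_one T


theorem layercake8 (h : ℝ → ℝ≥0∞) (T : ℝ≥0∞) (hT0 : T ≠ 0) (hTt : T ≠ ⊤)
    (hhT : ∀ x, h x ≤ T) (hmeas : ∀ s : ℝ≥0∞, MeasurableSet {x | s < h x}) :
    ∫⁻ x, h x ≤ ∑' k : ℕ, T * 8⁻¹ ^ k * volume {x | T * 8⁻¹ ^ (k + 1) < h x} := by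
  classical
  have hpt : ∀ x, h x ≤ ∑' k : ℕ,
      ({x | T * 8⁻¹ ^ (k + 1) < h x}).indicator (fun _ => T * 8⁻¹ ^ k) x := by
    intro x
    by_cases hx0 : h x = 0
    · rw [hx0]; exact zero_le
    have hP : ∃ n, T * 8⁻¹ ^ n < h x := by
      obtain ⟨m, hm⟩ := ENNReal.exists_inv_two_pow_lt (a := h x / T)
        (by simp [ENNReal.div_ne_zero]; exact ⟨hx0, hTt⟩)
      refine ⟨m, ?_⟩
      have h8 : (8 : ℝ≥0∞)⁻¹ ^ m ≤ 2⁻¹ ^ m :=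
        pow_le_pow_left' (ENNReal.inv_le_inv.mpr (by norm_num)) m
      have : T * 8⁻¹ ^ m ≤ T * 2⁻¹ ^ m := by gcongr
      refine lt_of_le_of_lt this ?_
      calc T * 2⁻¹ ^ m < T * (h x / T) := by
            rw [mul_comm T, mul_comm T]; exact ENNReal.mul_lt_mul_left hT0 hTt hm
        _ = h x := ENNReal.mul_div_cancel hT0 hTt
    set n₀ := Nat.find hP with hn₀
    have hspec : T * 8⁻¹ ^ n₀ < h x := Nat.find_spec hP
    have hn₀pos : n₀ ≠ 0 := by
      intro h0
      rw [h0] at hspec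
      simp only [pow_zero, mul_one] at hspec
      exact absurd (hhT x) (not_le.mpr hspec)
    obtain ⟨k₀, hk₀⟩ : ∃ k₀, n₀ = k₀ + 1 := ⟨n₀ - 1, (Nat.succ_pred_eq_of_pos (Nat.pos_of_ne_zero hn₀pos)).symm⟩
    have hupper : h x ≤ T * 8⁻¹ ^ k₀ := not_lt.mp (Nat.find_min hP (by omega : k₀ < n₀))
    calc h x ≤ T * 8⁻¹ ^ k₀ := hupper
      _ ≤ ∑' j : ℕ, T * 8⁻¹ ^ (k₀ + j) := by
          rw [show (fun j : ℕ => T * 8⁻¹ ^ (k₀ + j)) = fun j : ℕ => (T * 8⁻¹ ^ k₀) * 8⁻¹ ^ j by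
            funext j; rw [pow_add, mul_assoc], ENNReal.tsum_mul_left, ENNReal.tsum_geometric]
          conv_lhs => rw [← mul_one (T * 8⁻¹ ^ k₀)]
          gcongr
          rw [ENNReal.le_inv_iff_mul_le, one_mul]
          exact tsub_le_self
      _ ≤ ∑' k : ℕ, ({x | T * 8⁻¹ ^ (k + 1) < h x}).indicator (fun _ => T * 8⁻¹ ^ k) x := by
          refine Summable.tsum_le_tsum_of_inj (fun j => k₀ + j) (fun a b hab => by simp only [add_right_inj] at hab; exact Nat.add_left_cancel hab)
            (fun c _ => zero_le) (fun j => ?_) ENNReal.summable ENNReal.summable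
          have hmem : x ∈ {x | T * 8⁻¹ ^ (k₀ + j + 1) < h x} := by
            have : T * 8⁻¹ ^ (k₀ + j + 1) ≤ T * 8⁻¹ ^ n₀ :=
              mul_le_mul_right (pow_le_pow_right_of_le_one' (ENNReal.inv_le_one.mpr (by norm_num)) (by omega)) T
            exact lt_of_le_of_lt this hspec
          rw [Set.indicator_of_mem hmem]
  calc ∫⁻ x, h x ≤ ∫⁻ x, ∑' k : ℕ,
        ({x | T * 8⁻¹ ^ (k + 1) < h x}).indicator (fun _ => T * 8⁻¹ ^ k) x :=
        lintegral_mono hpt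
    _ = ∑' k : ℕ, ∫⁻ x, ({x | T * 8⁻¹ ^ (k + 1) < h x}).indicator (fun _ => T * 8⁻¹ ^ k) x :=
        lintegral_tsum (fun k => ((measurable_const).indicator (hmeas _)).aemeasurable)
    _ = ∑' k : ℕ, T * 8⁻¹ ^ k * volume {x | T * 8⁻¹ ^ (k + 1) < h x} := by
        congr 1; funext k
        rw [lintegral_indicator (hmeas _), setLIntegral_const]
theorem MB_weak' (u : ℝ → ℝ≥0∞) (hu : Measurable u) {r : ℝ≥0∞} (hr0 : r ≠ 0) (hrt : r ≠ ⊤) :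
    volume {x | r < MB u x} ≤ 3 * (∫⁻ y, u y) / r := by
  rw [ENNReal.le_div_iff_mul_le (Or.inl hr0) (Or.inl hrt)]
  exact MB_weak u hu hr0 hrt

theorem key_bound {p : ℝ} (hp1 : 1 < p) (hp2 : p ≤ 2) (f g : ℝ → ℂ) (hfm : Measurable f)
    (E' : Set ℝ) (hE'm : MeasurableSet E')
    (hg : ∀ y, (‖g y‖₊ : ℝ≥0∞) = E'.indicator 1 y)
    (T : ℝ≥0∞) (hT0 : T ≠ 0) (hTt : T ≠ ⊤)
    (hE' : ∀ y ∈ E', MB (fun z => (‖f z‖₊ : ℝ≥0∞) ^ p) y ≤ T ^ p)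
    (hU0 : (∫⁻ y, (‖f y‖₊ : ℝ≥0∞) ^ p) ≠ 0) (hUt : (∫⁻ y, (‖f y‖₊ : ℝ≥0∞) ^ p) ≠ ⊤)
    (hν0 : volume E' ≠ 0) (hνt : volume E' ≠ ⊤) :
    ∫⁻ x, bimax p f g x ≤
      96 * ((∫⁻ y, (‖f y‖₊ : ℝ≥0∞) ^ p) ^ (p+1)⁻¹ * (volume E') ^ (p*(p+1)⁻¹)
        * T ^ (p+1)⁻¹) := by
  have hp0 : 0 < p := by linarith
  set α : ℝ := (p+1)⁻¹ with hα
  set β : ℝ := p * (p+1)⁻¹ with hβ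
  have hα0 : 0 < α := by rw [hα]; positivity
  have hβ0 : 0 < β := by rw [hβ]; positivity
  have hαβ : α + β = 1 := by
    rw [hα, hβ]; field_simp; ring
  have h3α : 1 ≤ 3 * α := by
    rw [hα, ← div_eq_mul_inv, le_div_iff₀ (by linarith : (0:ℝ) < p + 1), one_mul]
    linarith
  set u : ℝ → ℝ≥0∞ := fun z => (‖f z‖₊ : ℝ≥0∞) ^ p with hu
  set v : ℝ → ℝ≥0∞ := fun z => (‖g z‖₊ : ℝ≥0∞) with hv
  have hum : Measurable u := (hfm.nnnorm.coe_nnreal_ennreal).pow_const p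
  have hvm : Measurable v := by
    have : v = E'.indicator 1 := funext hg
    rw [this]; exact measurable_one.indicator hE'm
  set U : ℝ≥0∞ := ∫⁻ y, u y with hU
  set ν : ℝ≥0∞ := volume E' with hν
  have hIv : ∫⁻ y, v y = ν := by
    have : v = E'.indicator 1 := funext hg
    rw [this, lintegral_indicator hE'm]
    simp [hν]
  set Y : ℝ≥0∞ := U ^ α * ν ^ β with hY
  have hY0 : Y ≠ 0 := by
    simp only [hY, ne_eq, mul_eq_zero, not_or, ENNReal.rpow_eq_zero_iff]
    push_neg
    constructor
    · exact ⟨fun h => absurd h hU0, fun h => absurd h hUt⟩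
    · exact ⟨fun h => absurd h hν0, fun h => absurd h hνt⟩
  have hYt : Y ≠ ⊤ := by
    rw [hY]
    refine ENNReal.mul_ne_top ?_ ?_
    · rw [ne_eq, ENNReal.rpow_eq_top_iff]; push_neg
      exact ⟨fun h => absurd h hU0, fun h => absurd h hUt⟩
    · rw [ne_eq, ENNReal.rpow_eq_top_iff]; push_neg
      exact ⟨fun h => absurd h hν0, fun h => absurd h hνt⟩
  -- per-level bound
  have keylevel : ∀ s : ℝ≥0∞, s ≠ 0 → s ≠ ⊤ →
      volume {x | s < bimax p f g x} ≤ 6 * Y * s ^ α * s⁻¹ := by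
    intro s hs0 hst
    set w : ℝ≥0∞ := (U * s * ν⁻¹) ^ α with hw
    have hb0 : U * s * ν⁻¹ ≠ 0 := by
      simp only [ne_eq, mul_eq_zero, not_or]
      exact ⟨⟨hU0, hs0⟩, ENNReal.inv_ne_zero.mpr hνt⟩
    have hbt : U * s * ν⁻¹ ≠ ⊤ :=
      ENNReal.mul_ne_top (ENNReal.mul_ne_top hUt hst) (ENNReal.inv_ne_top.mpr hν0)
    have hw0 : w ≠ 0 := by
      rw [hw, ne_eq, ENNReal.rpow_eq_zero_iff]
      push_neg
      exact ⟨fun h => absurd h hb0, fun h => absurd h hbt⟩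
    have hwt : w ≠ ⊤ := by
      rw [hw, ne_eq, ENNReal.rpow_eq_top_iff]
      push_neg
      exact ⟨fun h => absurd h hb0, fun h => absurd h hbt⟩
    have hwp0 : w ^ p ≠ 0 := by
      rw [ne_eq, ENNReal.rpow_eq_zero_iff]; push_neg
      exact ⟨fun h => absurd h hw0, fun h => absurd h hwt⟩
    have hwpt : w ^ p ≠ ⊤ := by
      rw [ne_eq, ENNReal.rpow_eq_top_iff]; push_neg
      exact ⟨fun h => absurd h hw0, fun h => absurd h hwt⟩
    have hsw0 : s / w ≠ 0 := by
      simp only [ne_eq, ENNReal.div_eq_zero_iff, not_or]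
      exact ⟨hs0, hwt⟩
    have hswt : s / w ≠ ⊤ := by
      simp only [ne_eq, ENNReal.div_eq_top, not_and_or, not_or]
      push_neg
      exact ⟨Or.inr hw0, Or.inl hst⟩
    -- inclusion
    have hincl : {x | s < bimax p f g x} ⊆
        {x | w ^ p < MB u x} ∪ {x | s / w < MB v x} := by
      intro x hx
      by_contra hcon
      simp only [Set.mem_union, Set.mem_setOf_eq, not_or, not_lt] at hcon
      have hb : bimax p f g x ≤ (MB u x) ^ p⁻¹ * MB v x := bimax_le_prod hp0 f g x
      have : bimax p f g x ≤ s := by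
        calc bimax p f g x ≤ (MB u x) ^ p⁻¹ * MB v x := hb
          _ ≤ (w ^ p) ^ p⁻¹ * (s / w) :=
            mul_le_mul' (ENNReal.rpow_le_rpow hcon.1 (by positivity)) hcon.2
          _ = w * (s / w) := by
            rw [← ENNReal.rpow_mul, mul_inv_cancel₀ hp0.ne', ENNReal.rpow_one]
          _ = s := ENNReal.mul_div_cancel hw0 hwt
      exact absurd hx (not_lt.mpr this)
    have hvol : volume {x | s < bimax p f g x} ≤ 3 * U / w ^ p + 3 * ν / (s / w) := by
      calc volume {x | s < bimax p f g x}
          ≤ volume ({x | w ^ p < MB u x} ∪ {x | s / w < MB v x}) := measure_mono hincl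
        _ ≤ volume {x | w ^ p < MB u x} + volume {x | s / w < MB v x} := measure_union_le _ _
        _ ≤ 3 * U / w ^ p + 3 * ν / (s / w) := by
            refine add_le_add ?_ ?_
            · exact MB_weak' u hum hwp0 hwpt
            · have := MB_weak' v hvm hsw0 hswt
              rwa [hIv] at this
    refine hvol.trans (le_of_eq ?_)
    -- algebraic identity
    have hwp : w ^ p = U ^ β * s ^ β * (ν ^ β)⁻¹ := by
      rw [hw, ← ENNReal.rpow_mul]
      have : α * p = β := by rw [hα, hβ]; ring
      rw [this]
      rw [ENNReal.mul_rpow_of_ne_top (ENNReal.mul_ne_top hUt hst) (ENNReal.inv_ne_top.mpr hν0),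
        ENNReal.mul_rpow_of_ne_top hUt hst, ENNReal.inv_rpow]
    have hcancelU : U * (U ^ β)⁻¹ = U ^ α := by
      nth_rewrite 1 [← ENNReal.rpow_one U]
      rw [← ENNReal.rpow_neg, ← ENNReal.rpow_add _ _ hU0 hUt]
      congr 1
      linarith
    have hcancelν : ν * (ν ^ α)⁻¹ = ν ^ β := by
      nth_rewrite 1 [← ENNReal.rpow_one ν]
      rw [← ENNReal.rpow_neg, ← ENNReal.rpow_add _ _ hν0 hνt]
      congr 1
      linarith
    have hsβ : (s ^ β)⁻¹ = s ^ α * s⁻¹ := by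
      rw [← ENNReal.rpow_neg, ← ENNReal.rpow_neg_one s, ← ENNReal.rpow_add _ _ hs0 hst]
      congr 1
      linarith
    have hUβ0 : U ^ β ≠ 0 := by
      rw [ne_eq, ENNReal.rpow_eq_zero_iff]; push_neg
      exact ⟨fun h => absurd h hU0, fun h => absurd h hUt⟩
    have hUβt : U ^ β ≠ ⊤ := by
      rw [ne_eq, ENNReal.rpow_eq_top_iff]; push_neg
      exact ⟨fun h => absurd h hU0, fun h => absurd h hUt⟩
    have hνβ0 : ν ^ β ≠ 0 := by
      rw [ne_eq, ENNReal.rpow_eq_zero_iff]; push_neg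
      exact ⟨fun h => absurd h hν0, fun h => absurd h hνt⟩
    have hνβt : ν ^ β ≠ ⊤ := by
      rw [ne_eq, ENNReal.rpow_eq_top_iff]; push_neg
      exact ⟨fun h => absurd h hν0, fun h => absurd h hνt⟩
    have hsβ0 : s ^ β ≠ 0 := by
      rw [ne_eq, ENNReal.rpow_eq_zero_iff]; push_neg
      exact ⟨fun h => absurd h hs0, fun h => absurd h hst⟩
    have hsβt : s ^ β ≠ ⊤ := by
      rw [ne_eq, ENNReal.rpow_eq_top_iff]; push_neg
      exact ⟨fun h => absurd h hs0, fun h => absurd h hst⟩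
    have e1 : 3 * U / w ^ p = 3 * Y * s ^ α * s⁻¹ := by
      rw [hwp, div_eq_mul_inv]
      rw [ENNReal.mul_inv (Or.inl (mul_ne_zero hUβ0 hsβ0)) (Or.inr (ENNReal.inv_ne_zero.mpr hνβt)),
        ENNReal.mul_inv (Or.inl hUβ0) (Or.inr hsβ0), inv_inv]
      rw [hsβ]
      calc 3 * U * ((U ^ β)⁻¹ * (s ^ α * s⁻¹) * ν ^ β)
          = 3 * (U * (U ^ β)⁻¹) * ν ^ β * s ^ α * s⁻¹ := by ring
        _ = 3 * Y * s ^ α * s⁻¹ := by rw [hcancelU, hY]; ring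
    have e2 : 3 * ν / (s / w) = 3 * Y * s ^ α * s⁻¹ := by
      rw [div_eq_mul_inv (3 * ν) (s / w), div_eq_mul_inv s w,
        ENNReal.mul_inv (Or.inl hs0) (Or.inr (ENNReal.inv_ne_zero.mpr hwt)), inv_inv]
      have hwexp : w = U ^ α * s ^ α * (ν ^ α)⁻¹ := by
        rw [hw]
        rw [ENNReal.mul_rpow_of_ne_top (ENNReal.mul_ne_top hUt hst) (ENNReal.inv_ne_top.mpr hν0),
          ENNReal.mul_rpow_of_ne_top hUt hst, ENNReal.inv_rpow]
      have hνα0 : ν ^ α ≠ 0 := by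
        rw [ne_eq, ENNReal.rpow_eq_zero_iff]; push_neg
        exact ⟨fun h => absurd h hν0, fun h => absurd h hνt⟩
      have hνατ : ν ^ α ≠ ⊤ := by
        rw [ne_eq, ENNReal.rpow_eq_top_iff]; push_neg
        exact ⟨fun h => absurd h hν0, fun h => absurd h hνt⟩
      calc 3 * ν * (s⁻¹ * w)
          = 3 * ν * (s⁻¹ * (U ^ α * s ^ α * (ν ^ α)⁻¹)) := by rw [hwexp]
        _ = 3 * (ν * (ν ^ α)⁻¹) * U ^ α * s ^ α * s⁻¹ := by ring
        _ = 3 * Y * s ^ α * s⁻¹ := by rw [hcancelν, hY]; ring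
    rw [e1, e2]
    have : (6 : ℝ≥0∞) = 3 + 3 := by norm_num
    rw [this]
    ring
  -- layer cake and summation
  have hbT : ∀ x, bimax p f g x ≤ T := bimax_le_of_trim hp0 f g T E' hE'm hg hE'
  have hlay := layercake8 (bimax p f g) T hT0 hTt hbT
    (fun s => (isOpen_bimax_gt p f g s).measurableSet)
  refine hlay.trans ?_
  have h8i0 : (8:ℝ≥0∞)⁻¹ ≠ 0 := ENNReal.inv_ne_zero.mpr (by norm_num)
  have h8it : (8:ℝ≥0∞)⁻¹ ≠ ⊤ := ENNReal.inv_ne_top.mpr (by norm_num)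
  have hterm : ∀ k : ℕ, T * 8⁻¹ ^ k * volume {x | T * 8⁻¹ ^ (k+1) < bimax p f g x}
      ≤ 48 * Y * T ^ α * 2⁻¹ ^ k := by
    intro k
    set s : ℝ≥0∞ := T * 8⁻¹ ^ (k+1) with hsdef
    have hs0 : s ≠ 0 := mul_ne_zero hT0 (pow_ne_zero _ h8i0)
    have hst : s ≠ ⊤ := ENNReal.mul_ne_top hTt (ENNReal.pow_ne_top h8it)
    have hk := keylevel s hs0 hst
    have hP1 : T * 8⁻¹ ^ k * s⁻¹ = 8 := by
      rw [hsdef, ENNReal.mul_inv (Or.inl hT0) (Or.inl hTt), ENNReal.inv_pow, inv_inv]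
      have h8k0 : (8:ℝ≥0∞) ^ k ≠ 0 := pow_ne_zero _ (by norm_num)
      have h8kt : (8:ℝ≥0∞) ^ k ≠ ⊤ := ENNReal.pow_ne_top (by norm_num)
      calc T * 8⁻¹ ^ k * (T⁻¹ * 8 ^ (k+1))
          = (T * T⁻¹) * ((8 ^ k)⁻¹ * 8 ^ (k+1)) := by rw [← ENNReal.inv_pow]; ring
        _ = (8 ^ k)⁻¹ * 8 ^ (k+1) := by rw [ENNReal.mul_inv_cancel hT0 hTt, one_mul]
        _ = (8 ^ k)⁻¹ * (8 ^ k * 8) := by rw [pow_succ]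
        _ = 8 := by rw [← mul_assoc, ENNReal.inv_mul_cancel h8k0 h8kt, one_mul]
    have hP2 : s ^ α ≤ T ^ α * 2⁻¹ ^ k := by
      rw [hsdef, ENNReal.mul_rpow_of_ne_top hTt (ENNReal.pow_ne_top h8it)]
      gcongr
      have h8 : (8:ℝ≥0∞)⁻¹ = 2⁻¹ ^ 3 := by
        rw [← ENNReal.inv_pow]; norm_num
      rw [h8, ← pow_mul, ← ENNReal.rpow_natCast (2⁻¹ : ℝ≥0∞) (3*(k+1)), ← ENNReal.rpow_mul,
        ← ENNReal.rpow_natCast (2⁻¹ : ℝ≥0∞) k]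
      apply ENNReal.rpow_le_rpow_of_exponent_ge (ENNReal.inv_le_one.mpr one_le_two)
      push_cast
      nlinarith [h3α, (Nat.cast_nonneg k : (0:ℝ) ≤ (k:ℕ))]
    calc T * 8⁻¹ ^ k * volume {x | s < bimax p f g x}
        ≤ T * 8⁻¹ ^ k * (6 * Y * s ^ α * s⁻¹) := mul_le_mul_right hk _
      _ = 6 * Y * s ^ α * (T * 8⁻¹ ^ k * s⁻¹) := by ring
      _ = 6 * Y * s ^ α * 8 := by rw [hP1]
      _ ≤ 6 * Y * (T ^ α * 2⁻¹ ^ k) * 8 := by gcongr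
      _ = 48 * Y * T ^ α * 2⁻¹ ^ k := by ring
  calc ∑' k : ℕ, T * 8⁻¹ ^ k * volume {x | T * 8⁻¹ ^ (k+1) < bimax p f g x}
      ≤ ∑' k : ℕ, 48 * Y * T ^ α * 2⁻¹ ^ k := ENNReal.tsum_le_tsum hterm
    _ = 48 * Y * T ^ α * 2 := by
        rw [ENNReal.tsum_mul_left, ENNReal.tsum_geometric, ENNReal.one_sub_inv_two, inv_inv]
    _ = 96 * (U ^ α * ν ^ β * T ^ α) := by rw [hY]; ring

theorem pairing_lower (Tf : ℝ → ℂ) (hTfm : Measurable Tf) (t M N : ℝ) (ht : 0 < t)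
    (E' : Set ℝ) (hE'm : MeasurableSet E') (hE'vol : volume E' ≠ ⊤)
    (hsub : ∀ x ∈ E', t < ‖Tf x‖ ∧ ‖Tf x‖ ≤ M ∧ |x| ≤ N) :
    Nice (E'.indicator (fun y => ((‖Tf y‖⁻¹ : ℝ) : ℂ) * (starRingEnd ℂ) (Tf y))) ∧
    (∀ y, (‖E'.indicator (fun y => ((‖Tf y‖⁻¹ : ℝ) : ℂ) * (starRingEnd ℂ) (Tf y)) y‖₊ : ℝ≥0∞)
        = E'.indicator 1 y) ∧
    ENNReal.ofReal t * volume E' ≤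
      ENNReal.ofReal ‖∫ x, Tf x *
        E'.indicator (fun y => ((‖Tf y‖⁻¹ : ℝ) : ℂ) * (starRingEnd ℂ) (Tf y)) x‖ := by
  set g' : ℝ → ℂ := E'.indicator (fun y => ((‖Tf y‖⁻¹ : ℝ) : ℂ) * (starRingEnd ℂ) (Tf y))
    with hg'
  have hnorm1 : ∀ y ∈ E', ‖g' y‖ = 1 := by
    intro y hy
    have hy0 : ‖Tf y‖ ≠ 0 := (ht.trans (hsub y hy).1).ne'
    rw [hg', Set.indicator_of_mem hy, norm_mul, Complex.norm_real, RCLike.norm_conj,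
      norm_inv, norm_norm]
    exact inv_mul_cancel₀ hy0
  have hnorm0 : ∀ y ∉ E', g' y = 0 := fun y hy => Set.indicator_of_notMem hy _
  have hgm : Measurable g' := by
    apply Measurable.indicator _ hE'm
    exact (Complex.measurable_ofReal.comp hTfm.norm.inv).mul
      (Complex.continuous_conj.measurable.comp hTfm)
  have hNice : Nice g' := by
    refine ⟨hgm, ⟨1, fun x => ?_⟩, ⟨N, fun x hx => ?_⟩⟩
    · by_cases hx : x ∈ E'
      · rw [hnorm1 x hx]
      · rw [hnorm0 x hx]; simp
    · refine hnorm0 x fun hmem => ?_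
      exact absurd (hsub x hmem).2.2 (not_le.mpr hx)
  have hnn : ∀ y, (‖g' y‖₊ : ℝ≥0∞) = E'.indicator 1 y := by
    intro y
    by_cases hy : y ∈ E'
    · rw [Set.indicator_of_mem hy, ← ofReal_norm_eq_coe_nnnorm, hnorm1 y hy]
      simp
    · rw [Set.indicator_of_notMem hy, hnorm0 y hy]
      simp
  refine ⟨hNice, hnn, ?_⟩
  -- the pairing integral is the integral of ‖Tf‖ over E'
  have hpt : ∀ x, Tf x * g' x = ((E'.indicator (fun y => ‖Tf y‖) x : ℝ) : ℂ) := by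
    intro x
    by_cases hx : x ∈ E'
    · rw [hg', Set.indicator_of_mem hx, Set.indicator_of_mem hx]
      have hx0 : ‖Tf x‖ ≠ 0 := (ht.trans (hsub x hx).1).ne'
      calc Tf x * (((‖Tf x‖⁻¹ : ℝ) : ℂ) * (starRingEnd ℂ) (Tf x))
          = ((‖Tf x‖⁻¹ : ℝ) : ℂ) * (Tf x * (starRingEnd ℂ) (Tf x)) := by ring
        _ = ((‖Tf x‖⁻¹ : ℝ) : ℂ) * ((Complex.normSq (Tf x) : ℝ) : ℂ) := by
            rw [Complex.mul_conj]
        _ = ((‖Tf x‖⁻¹ * Complex.normSq (Tf x) : ℝ) : ℂ) := by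
            rw [Complex.ofReal_mul]
        _ = ((‖Tf x‖ : ℝ) : ℂ) := by
            congr 1
            rw [Complex.normSq_eq_norm_sq, sq, ← mul_assoc,
              inv_mul_cancel₀ hx0, one_mul]
    · rw [Set.indicator_of_notMem hx, hnorm0 x hx, mul_zero]
      simp
  have hIeq : (∫ x, Tf x * g' x) = ((∫ x, E'.indicator (fun y => ‖Tf y‖) x : ℝ) : ℂ) := by
    rw [show (fun x => Tf x * g' x) = fun x => ((E'.indicator (fun y => ‖Tf y‖) x : ℝ) : ℂ)
      from funext hpt]
    exact integral_ofReal
  have hint : IntegrableOn (fun x => ‖Tf x‖) E' volume := by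
    apply Measure.integrableOn_of_bounded hE'vol hTfm.norm.aestronglyMeasurable (M := M)
    filter_upwards [ae_restrict_mem hE'm] with x hx
    rw [norm_norm]
    exact (hsub x hx).2.1
  have hlow : t * (volume E').toReal ≤ ∫ x, E'.indicator (fun y => ‖Tf y‖) x := by
    rw [integral_indicator hE'm]
    calc t * (volume E').toReal = ∫ _ in E', t := by rw [setIntegral_const, smul_eq_mul, measureReal_def]; ring
      _ ≤ ∫ x in E', ‖Tf x‖ := by
          apply setIntegral_mono_on (integrableOn_const hE'vol) hint hE'm
          exact fun x hx => (hsub x hx).1.le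
  calc ENNReal.ofReal t * volume E'
      = ENNReal.ofReal (t * (volume E').toReal) := by
        rw [ENNReal.ofReal_mul ht.le, ENNReal.ofReal_toReal hE'vol]
    _ ≤ ENNReal.ofReal ‖∫ x, Tf x * g' x‖ := by
        apply ENNReal.ofReal_le_ofReal
        rw [hIeq, Complex.norm_real]
        exact hlow.trans (le_abs_self _)

theorem rpow_ne_zero' {x : ℝ≥0∞} (h0 : x ≠ 0) (ht : x ≠ ⊤) (y : ℝ) : x ^ y ≠ 0 := by
  rw [ne_eq, ENNReal.rpow_eq_zero_iff]
  push_neg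
  exact ⟨fun h => absurd h h0, fun h => absurd h ht⟩

theorem rpow_ne_top' {x : ℝ≥0∞} (h0 : x ≠ 0) (ht : x ≠ ⊤) (y : ℝ) : x ^ y ≠ ⊤ := by
  rw [ne_eq, ENNReal.rpow_eq_top_iff]
  push_neg
  exact ⟨fun h => absurd h h0, fun h => absurd h ht⟩

theorem bimax_zero_of_U_zero {p : ℝ} (hp0 : 0 < p) (f g : ℝ → ℂ)
    (hU0 : (∫⁻ y, (‖f y‖₊ : ℝ≥0∞) ^ p) = 0) (x : ℝ) : bimax p f g x = 0 := by
  have hMB : MB (fun z => (‖f z‖₊ : ℝ≥0∞) ^ p) x = 0 := by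
    refine le_antisymm ?_ (zero_le)
    refine iSup_le fun a => iSup_le fun b => iSup_le fun hab => iSup_le fun hx => ?_
    have h0 : ∫⁻ y in Set.Ioo a b, (‖f y‖₊ : ℝ≥0∞) ^ p = 0 :=
      le_antisymm ((setLIntegral_le_lintegral _ _).trans hU0.le) (zero_le)
    rw [h0, mul_zero]
  refine le_antisymm ?_ (zero_le)
  calc bimax p f g x ≤ (MB (fun z => (‖f z‖₊ : ℝ≥0∞) ^ p) x) ^ p⁻¹
        * MB (fun z => (‖g z‖₊ : ℝ≥0∞)) x := bimax_le_prod hp0 f g x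
    _ = 0 := by rw [hMB, ENNReal.zero_rpow_of_pos (by positivity), zero_mul]

/-- sparse-to-weak-type implication with sharp constant: a `(p,1)`-sparse
form bound `|⟨Tf, g⟩| ≤ A ‖M_{(p,1)}(f,g)‖₁` implies the weak-type bound
`‖Tf‖_{L^{p,∞}} ≤ C₀ A ‖f‖_p` with an absolute constant `C₀`, for `1 < p ≤ 2`. -/
theorem stmt15 :
    ∃ C₀ : ℝ, 0 < C₀ ∧
      ∀ p : ℝ, 1 < p → p ≤ 2 →
      ∀ (T : (ℝ → ℂ) → ℝ → ℂ) (A : ℝ), 0 ≤ A →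
        (∀ f, Nice f → Measurable (T f)) →
        (∀ f g, Nice f → Nice g →
          ENNReal.ofReal ‖∫ x : ℝ, T f x * g x‖ ≤
            ENNReal.ofReal A * ∫⁻ x : ℝ, bimax p f g x) →
        ∀ f, Nice f →
          weakNorm (volume : Measure ℝ) (T f) p ≤
            ENNReal.ofReal (C₀ * A) * eLpNorm f (ENNReal.ofReal p) volume := by
  refine ⟨20000, by norm_num, ?_⟩
  intro p hp1 hp2 T A hA hTm hB f hf
  obtain ⟨hfm, ⟨B, hfB⟩, ⟨R, hfR⟩⟩ := id hf
  have hp0 : 0 < p := by linarith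
  have hTfm : Measurable (T f) := hTm f hf
  set u : ℝ → ℝ≥0∞ := fun z => (‖f z‖₊ : ℝ≥0∞) ^ p with hu
  have hum : Measurable u := (hfm.nnnorm.coe_nnreal_ennreal).pow_const p
  set U : ℝ≥0∞ := ∫⁻ y, u y with hUdef
  have hUt : U ≠ ⊤ := by
    have hB0 : 0 ≤ B := le_trans (norm_nonneg _) (hfB 0)
    set R' : ℝ := max R 0 + 1 with hR'
    have hbound : ∀ y, u y ≤ (Set.Icc (-R') R').indicator
        (fun _ => ENNReal.ofReal B ^ p) y := by
      intro y
      by_cases hy : y ∈ Set.Icc (-R') R'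
      · rw [Set.indicator_of_mem hy, hu]
        apply ENNReal.rpow_le_rpow _ hp0.le
        rw [← ofReal_norm_eq_coe_nnnorm]
        exact ENNReal.ofReal_le_ofReal (hfB y)
      · rw [Set.indicator_of_notMem hy]
        have hy0 : f y = 0 := by
          apply hfR
          simp only [Set.mem_Icc, not_and_or, not_le] at hy
          have h1 : y ≤ |y| := le_abs_self y
          have h2 : -y ≤ |y| := neg_le_abs y
          have h3 : R ≤ max R 0 := le_max_left _ _
          rcases hy with h | h
          · rw [hR'] at h; linarith
          · rw [hR'] at h; linarith
        rw [hu]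
        simp only [hy0, norm_zero, nnnorm_zero, ENNReal.coe_zero]
        rw [ENNReal.zero_rpow_of_pos hp0]
    have : U ≤ ENNReal.ofReal B ^ p * volume (Set.Icc (-R') R') := by
      rw [hUdef]
      calc (∫⁻ y, u y) ≤ ∫⁻ y, (Set.Icc (-R') R').indicator
            (fun _ => ENNReal.ofReal B ^ p) y := lintegral_mono hbound
        _ = ENNReal.ofReal B ^ p * volume (Set.Icc (-R') R') := by
            rw [lintegral_indicator measurableSet_Icc, setLIntegral_const]
    refine ne_top_of_le_ne_top ?_ this
    exact ENNReal.mul_ne_top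
      (ENNReal.rpow_ne_top_of_nonneg hp0.le ENNReal.ofReal_ne_top)
      (by rw [Real.volume_Icc]; exact ENNReal.ofReal_ne_top)
  have hsnorm : eLpNorm f (ENNReal.ofReal p) volume = U ^ p⁻¹ := by
    rw [eLpNorm_eq_lintegral_rpow_enorm_toReal
        (by simp only [ne_eq, ENNReal.ofReal_eq_zero, not_le]; linarith) ENNReal.ofReal_ne_top,
      ENNReal.toReal_ofReal hp0.le, one_div, hUdef, hu]
    rfl
  rw [hsnorm]
  rw [weakNorm]
  refine iSup_le fun t => iSup_le fun ht => ?_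
  set τ : ℝ≥0∞ := ENNReal.ofReal t with hτ
  have hτ0 : τ ≠ 0 := by rw [hτ]; simp only [ne_eq, ENNReal.ofReal_eq_zero, not_le]; linarith
  have hτt : τ ≠ ⊤ := ENNReal.ofReal_ne_top
  set RHS : ℝ≥0∞ := ENNReal.ofReal (20000 * A) * U ^ p⁻¹ with hRHS
  -- the exhausting sets
  set E : ℕ → Set ℝ := fun n => {x | t < ‖T f x‖ ∧ ‖T f x‖ ≤ n ∧ |x| ≤ n} with hE
  have hEm : ∀ n, MeasurableSet (E n) := by
    intro n
    have : E n = {x | t < ‖T f x‖} ∩ ({x | ‖T f x‖ ≤ n} ∩ Set.Icc (-(n:ℝ)) n) := by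
      ext x
      simp only [hE, Set.mem_setOf_eq, Set.mem_inter_iff, Set.mem_Icc, abs_le]
    rw [this]
    exact (measurableSet_lt measurable_const hTfm.norm).inter
      ((measurableSet_le hTfm.norm measurable_const).inter measurableSet_Icc)
  have hEvol : ∀ n, volume (E n) ≠ ⊤ := by
    intro n
    have hsub : E n ⊆ Set.Icc (-(n:ℝ)) n := by
      intro x hx
      rw [Set.mem_Icc, ← abs_le]
      exact hx.2.2
    exact ne_top_of_le_ne_top (by rw [Real.volume_Icc]; exact ENNReal.ofReal_ne_top)
      (measure_mono hsub)
  have hEunion : ⋃ n, E n = {x | t < ‖T f x‖} := by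
    ext x
    simp only [Set.mem_iUnion, hE, Set.mem_setOf_eq]
    constructor
    · rintro ⟨n, hn, _, _⟩; exact hn
    · intro hx
      obtain ⟨n, hn⟩ := exists_nat_ge (max ‖T f x‖ |x|)
      exact ⟨n, hx, le_trans (le_max_left _ _) hn, le_trans (le_max_right _ _) hn⟩
  have hmono : Monotone E := by
    intro m n hmn x hx
    have hcast : (m:ℝ) ≤ n := Nat.cast_le.mpr hmn
    exact ⟨hx.1, hx.2.1.trans hcast, hx.2.2.trans hcast⟩
  have hvol_sup : volume {x | t < ‖T f x‖} = ⨆ n, volume (E n) := by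
    rw [← hEunion]
    exact hmono.directed_le.measure_iUnion
  have hkey : ∀ n : ℕ, τ * (volume (E n)) ^ (1/p) ≤ RHS := by
    intro n
    rw [one_div]
    set ν₀ : ℝ≥0∞ := volume (E n) with hν₀def
    have hν₀t : ν₀ ≠ ⊤ := hEvol n
    have hpinv1 : p⁻¹ ≤ 1 := by
      have h1 : p⁻¹ * p = 1 := inv_mul_cancel₀ hp0.ne'
      nlinarith [inv_pos.mpr hp0]
    by_cases hA0 : A = 0
    · obtain ⟨hNice, hnn, hlow⟩ := pairing_lower (T f) hTfm t n n ht (E n) (hEm n) hν₀t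
        (fun x hx => ⟨hx.1, hx.2.1, hx.2.2⟩)
      have hz : τ * ν₀ ≤ 0 := by
        calc τ * ν₀ ≤ ENNReal.ofReal ‖∫ x, T f x *
              (E n).indicator (fun y => ((‖T f y‖⁻¹ : ℝ) : ℂ) * (starRingEnd ℂ) (T f y)) x‖ := hlow
          _ ≤ ENNReal.ofReal A * ∫⁻ x, bimax p f
              ((E n).indicator (fun y => ((‖T f y‖⁻¹ : ℝ) : ℂ) * (starRingEnd ℂ) (T f y))) x :=
            hB f _ hf hNice
          _ = 0 := by rw [hA0, ENNReal.ofReal_zero, zero_mul]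
      have hν₀0 : ν₀ = 0 := by
        rcases mul_eq_zero.mp (le_zero_iff.mp hz) with h | h
        · exact absurd h hτ0
        · exact h
      rw [hν₀0, ENNReal.zero_rpow_of_pos (by positivity), mul_zero]
      exact zero_le
    have hA' : 0 < A := lt_of_le_of_ne hA (Ne.symm hA0)
    set a : ℝ≥0∞ := ENNReal.ofReal A with hadef
    have ha0 : a ≠ 0 := by rw [hadef]; simp only [ne_eq, ENNReal.ofReal_eq_zero, not_le]; linarith
    have hat : a ≠ ⊤ := ENNReal.ofReal_ne_top
    set Tc : ℝ≥0∞ := ENNReal.ofReal (t / A) with hTcdef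
    have hTc0 : Tc ≠ 0 := by
      rw [hTcdef]; simp only [ne_eq, ENNReal.ofReal_eq_zero, not_le]; positivity
    have hTct : Tc ≠ ⊤ := ENNReal.ofReal_ne_top
    have hTca : Tc = τ / a := by rw [hTcdef, hτ, hadef, ENNReal.ofReal_div_of_pos hA']
    have hTcp0 : Tc ^ p ≠ 0 := rpow_ne_zero' hTc0 hTct p
    have hTcpt : Tc ^ p ≠ ⊤ := rpow_ne_top' hTc0 hTct p
    set G : Set ℝ := {x | Tc ^ p < MB u x} with hG
    have hGm : MeasurableSet G := (isOpen_MB_gt u _).measurableSet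
    set E' : Set ℝ := E n \ G with hE'def
    have hE'm : MeasurableSet E' := (hEm n).diff hGm
    have hE'sub : E' ⊆ E n := Set.diff_subset
    set ν : ℝ≥0∞ := volume E' with hνdef
    have hνt : ν ≠ ⊤ := ne_top_of_le_ne_top hν₀t (measure_mono hE'sub)
    rcases le_or_gt (ν₀ / 2) (volume G) with hcase | hcase
    · -- Case 1 : the set where the maximal function is large has large measure
      have h2 : volume G ≤ 3 * U / Tc ^ p := by
        rw [ENNReal.le_div_iff_mul_le (Or.inl hTcp0) (Or.inl hTcpt)]
        exact MB_weak u hum hTcp0 hTcpt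
      have h3 : ν₀ ≤ 6 * U / Tc ^ p := by
        calc ν₀ = 2 * (ν₀ / 2) := (ENNReal.mul_div_cancel two_ne_zero ENNReal.ofNat_ne_top).symm
          _ ≤ 2 * volume G := by gcongr
          _ ≤ 2 * (3 * U / Tc ^ p) := by gcongr
          _ = 6 * U / Tc ^ p := by rw [← mul_div_assoc, ← mul_assoc]; norm_num
      have h4 : ν₀ ^ p⁻¹ ≤ 6 * U ^ p⁻¹ / Tc := by
        calc ν₀ ^ p⁻¹ ≤ (6 * U / Tc ^ p) ^ p⁻¹ := ENNReal.rpow_le_rpow h3 (by positivity)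
          _ = (6 * U) ^ p⁻¹ / (Tc ^ p) ^ p⁻¹ := ENNReal.div_rpow_of_nonneg _ _ (by positivity)
          _ = (6 : ℝ≥0∞) ^ p⁻¹ * U ^ p⁻¹ / Tc := by
              rw [ENNReal.mul_rpow_of_ne_top (by norm_num) hUt, ← ENNReal.rpow_mul,
                mul_inv_cancel₀ hp0.ne', ENNReal.rpow_one]
          _ ≤ 6 * U ^ p⁻¹ / Tc := by
              gcongr
              calc (6 : ℝ≥0∞) ^ p⁻¹ ≤ 6 ^ (1:ℝ) :=
                    ENNReal.rpow_le_rpow_of_exponent_le (by norm_num) hpinv1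
                _ = 6 := ENNReal.rpow_one 6
      have hτTc : τ / Tc = a := by
        rw [hTca, div_eq_mul_inv, div_eq_mul_inv,
          ENNReal.mul_inv (Or.inl hτ0) (Or.inl hτt), inv_inv, ← mul_assoc,
          ENNReal.mul_inv_cancel hτ0 hτt, one_mul]
      calc τ * ν₀ ^ p⁻¹ ≤ τ * (6 * U ^ p⁻¹ / Tc) := by gcongr
        _ = 6 * U ^ p⁻¹ * (τ / Tc) := by
            rw [div_eq_mul_inv, div_eq_mul_inv]; ring
        _ = 6 * a * U ^ p⁻¹ := by rw [hτTc]; ring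
        _ ≤ RHS := by
            rw [hRHS, ENNReal.ofReal_mul (by norm_num : (0:ℝ) ≤ 20000), ← hadef]
            gcongr
            rw [ENNReal.ofReal_ofNat]
            norm_num
    · -- Case 2
      have hsplit : ν₀ ≤ ν + volume G := by
        rw [hνdef, hν₀def]
        calc volume (E n) ≤ volume (E' ∪ G) := measure_mono (fun x hx => by
              by_cases hxG : x ∈ G
              · exact Or.inr hxG
              · exact Or.inl ⟨hx, hxG⟩)
          _ ≤ volume E' + volume G := measure_union_le _ _
      have hν₀2ν : ν₀ ≤ 2 * ν := by
        have h5 : ν₀ / 2 + ν₀ / 2 ≤ ν + ν₀ / 2 := by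
          rw [ENNReal.add_halves]
          exact hsplit.trans (add_le_add_right hcase.le ν)
        have hhalf : ν₀ / 2 ≤ ν :=
          ENNReal.le_of_add_le_add_right (ENNReal.div_lt_top hν₀t (by norm_num)).ne h5
        calc ν₀ = 2 * (ν₀ / 2) := (ENNReal.mul_div_cancel two_ne_zero ENNReal.ofNat_ne_top).symm
          _ ≤ 2 * ν := by gcongr
      by_cases hν0 : ν = 0
      · have hz : ν₀ = 0 := le_zero_iff.mp (by rw [hν0, mul_zero] at hν₀2ν; exact hν₀2ν)
        rw [hz, ENNReal.zero_rpow_of_pos (by positivity), mul_zero]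
        exact zero_le
      obtain ⟨hNice, hnn, hlow⟩ := pairing_lower (T f) hTfm t n n ht E' hE'm hνt
        (fun x hx => ⟨(hE'sub hx).1, (hE'sub hx).2.1, (hE'sub hx).2.2⟩)
      set g' : ℝ → ℂ := E'.indicator
        (fun y => ((‖T f y‖⁻¹ : ℝ) : ℂ) * (starRingEnd ℂ) (T f y)) with hg'
      have hpair : τ * ν ≤ a * ∫⁻ x, bimax p f g' x := le_trans hlow (hB f g' hf hNice)
      by_cases hU0 : U = 0
      · exfalso
        have hzero : (∫⁻ x, bimax p f g' x) = 0 := by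
          have hbz : ∀ x, bimax p f g' x = 0 :=
            bimax_zero_of_U_zero hp0 f g' (by rw [← hUdef]; exact hU0)
          calc (∫⁻ x, bimax p f g' x) = ∫⁻ _, (0:ℝ≥0∞) := by
                congr 1; funext x; exact hbz x
            _ = 0 := lintegral_zero
        rw [hzero, mul_zero] at hpair
        refine hν0 ?_
        rcases mul_eq_zero.mp (le_zero_iff.mp hpair) with h | h
        · exact absurd h hτ0
        · exact h
      have hE'trim : ∀ y ∈ E', MB u y ≤ Tc ^ p := fun y hy => not_lt.mp hy.2
      have hkb := key_bound hp1 hp2 f g' hfm E' hE'm hnn Tc hTc0 hTct hE'trim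
        (by rw [← hUdef]; exact hU0) (by rw [← hUdef]; exact hUt) hν0 hνt
      rw [← hUdef, ← hνdef] at hkb
      -- arithmetic facts
      have hα0 : (0:ℝ) < (p+1)⁻¹ := by positivity
      have hβ0 : (0:ℝ) < p*(p+1)⁻¹ := by positivity
      have hαβ : (p+1)⁻¹ + p*(p+1)⁻¹ = 1 := by field_simp; ring
      have hexp : (p+1)⁻¹ * (p*(p+1)⁻¹)⁻¹ = p⁻¹ := by
        rw [mul_inv, inv_inv]
        field_simp
      have hTcexp : Tc ^ (p+1)⁻¹ = τ ^ (p+1)⁻¹ * (a ^ (p+1)⁻¹)⁻¹ := by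
        rw [hTca, ENNReal.div_rpow_of_nonneg _ _ hα0.le, div_eq_mul_inv]
      have hcancela : a * (a ^ (p+1)⁻¹)⁻¹ = a ^ (p*(p+1)⁻¹) := by
        nth_rewrite 1 [← ENNReal.rpow_one a]
        rw [← ENNReal.rpow_neg, ← ENNReal.rpow_add _ _ ha0 hat]
        congr 1
        linarith
      have hchain : τ * ν ≤ 96 * a ^ (p*(p+1)⁻¹) * U ^ (p+1)⁻¹
          * (τ ^ (p+1)⁻¹ * ν ^ (p*(p+1)⁻¹)) := by
        calc τ * ν ≤ a * ∫⁻ x, bimax p f g' x := hpair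
          _ ≤ a * (96 * (U ^ (p+1)⁻¹ * ν ^ (p*(p+1)⁻¹) * Tc ^ (p+1)⁻¹)) := by gcongr
          _ = 96 * (a * (a ^ (p+1)⁻¹)⁻¹) * U ^ (p+1)⁻¹
              * (τ ^ (p+1)⁻¹ * ν ^ (p*(p+1)⁻¹)) := by rw [hTcexp]; ring
          _ = _ := by rw [hcancela]
      have hmain : τ ^ (p*(p+1)⁻¹) * ν ^ (p+1)⁻¹ ≤ 96 * a ^ (p*(p+1)⁻¹) * U ^ (p+1)⁻¹ := by
        have hC0 : τ ^ (p+1)⁻¹ * ν ^ (p*(p+1)⁻¹) ≠ 0 :=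
          mul_ne_zero (rpow_ne_zero' hτ0 hτt _) (rpow_ne_zero' hν0 hνt _)
        have hCt : τ ^ (p+1)⁻¹ * ν ^ (p*(p+1)⁻¹) ≠ ⊤ :=
          ENNReal.mul_ne_top (rpow_ne_top' hτ0 hτt _) (rpow_ne_top' hν0 hνt _)
        rw [← ENNReal.mul_le_mul_iff_left hC0 hCt]
        calc τ ^ (p*(p+1)⁻¹) * ν ^ (p+1)⁻¹ * (τ ^ (p+1)⁻¹ * ν ^ (p*(p+1)⁻¹))
            = (τ ^ (p*(p+1)⁻¹) * τ ^ (p+1)⁻¹) * (ν ^ (p+1)⁻¹ * ν ^ (p*(p+1)⁻¹)) := by ring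
          _ = τ * ν := by
              rw [← ENNReal.rpow_add _ _ hτ0 hτt, ← ENNReal.rpow_add _ _ hν0 hνt,
                show p*(p+1)⁻¹ + (p+1)⁻¹ = 1 by linarith, hαβ,
                ENNReal.rpow_one, ENNReal.rpow_one]
          _ ≤ _ := hchain
      have hβinv2 : (p*(p+1)⁻¹)⁻¹ ≤ 2 := by
        rw [mul_inv, inv_inv]
        have h1 : p⁻¹ * p = 1 := inv_mul_cancel₀ hp0.ne'
        nlinarith [inv_pos.mpr hp0]
      have hfin : τ * ν ^ p⁻¹ ≤ 9216 * a * U ^ p⁻¹ := by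
        have h := ENNReal.rpow_le_rpow hmain (le_of_lt (by positivity : (0:ℝ) < (p*(p+1)⁻¹)⁻¹))
        rw [ENNReal.mul_rpow_of_ne_top (rpow_ne_top' hτ0 hτt _) (rpow_ne_top' hν0 hνt _),
          ← ENNReal.rpow_mul τ, ← ENNReal.rpow_mul ν, mul_inv_cancel₀ hβ0.ne',
          hexp, ENNReal.rpow_one] at h
        refine h.trans ?_
        rw [ENNReal.mul_rpow_of_ne_top
            (ENNReal.mul_ne_top (by norm_num) (rpow_ne_top' ha0 hat _)) (rpow_ne_top' hU0 hUt _),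
          ENNReal.mul_rpow_of_ne_top (by norm_num) (rpow_ne_top' ha0 hat _),
          ← ENNReal.rpow_mul a, ← ENNReal.rpow_mul U, mul_inv_cancel₀ hβ0.ne',
          hexp, ENNReal.rpow_one]
        gcongr
        calc (96:ℝ≥0∞) ^ (p*(p+1)⁻¹)⁻¹ ≤ 96 ^ (2:ℝ) :=
              ENNReal.rpow_le_rpow_of_exponent_le (by norm_num) hβinv2
          _ = 9216 := by
              rw [show (2:ℝ) = ((2:ℕ):ℝ) by norm_num, ENNReal.rpow_natCast]
              norm_num
      calc τ * ν₀ ^ p⁻¹ ≤ τ * (2 * ν) ^ p⁻¹ := by gcongr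
        _ = τ * ((2:ℝ≥0∞) ^ p⁻¹ * ν ^ p⁻¹) := by
            rw [ENNReal.mul_rpow_of_ne_top (by norm_num) hνt]
        _ ≤ τ * (2 * ν ^ p⁻¹) := by
            gcongr
            calc (2:ℝ≥0∞) ^ p⁻¹ ≤ 2 ^ (1:ℝ) :=
                  ENNReal.rpow_le_rpow_of_exponent_le (by norm_num) hpinv1
              _ = 2 := ENNReal.rpow_one 2
        _ = 2 * (τ * ν ^ p⁻¹) := by ring
        _ ≤ 2 * (9216 * a * U ^ p⁻¹) := by gcongr
        _ = 18432 * a * U ^ p⁻¹ := by ring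
        _ ≤ RHS := by
            rw [hRHS, ENNReal.ofReal_mul (by norm_num : (0:ℝ) ≤ 20000), ← hadef]
            gcongr
            rw [ENNReal.ofReal_ofNat]
            norm_num
  -- conclude from hkey
  by_cases hR : RHS = ⊤
  · exact hR ▸ le_top
  have hbound : volume {x | t < ‖T f x‖} ≤ (RHS / τ) ^ p := by
    rw [hvol_sup]
    refine iSup_le fun n => ?_
    have h1 : (volume (E n)) ^ (1/p) ≤ RHS / τ := by
      rw [ENNReal.le_div_iff_mul_le (Or.inl hτ0) (Or.inl hτt), mul_comm]
      exact hkey n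
    calc volume (E n) = ((volume (E n)) ^ (1/p)) ^ p := by
          rw [← ENNReal.rpow_mul, one_div, inv_mul_cancel₀ hp0.ne', ENNReal.rpow_one]
      _ ≤ (RHS / τ) ^ p := ENNReal.rpow_le_rpow h1 hp0.le
  calc τ * volume {x | t < ‖T f x‖} ^ (1/p)
      ≤ τ * ((RHS / τ) ^ p) ^ (1/p) := by
        gcongr
    _ = τ * (RHS / τ) := by
        rw [← ENNReal.rpow_mul, mul_one_div, div_self hp0.ne', ENNReal.rpow_one]
    _ = RHS := ENNReal.mul_div_cancel hτ0 hτt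
end
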